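/- arXiv:1104.2222 — 6 statements merged into one kernel-verified Lean document; each statement's English description precedes it below -/
import Mathlib

section
/- Let A be a commutative ring and let x, y ∈ W(A) be Witt vectors such that x_i = y_i = 0 for i ≥ M and x_i^N = y_i^N = 0 for all i, where M, N ≥ 1 are integers. Then every coefficient of the sum s = x + y in W(A) is nilpotent, and s_i = 0 for all sufficiently large i (with a bound depending only on p, M, N). In particular, the set of Witt vectors with all coefficients nilpotent and only finitely many nonzero coefficients is closed under addition. -/
/-!
STATEMENT 1: if `x, y ∈ W(A)` satisfy `x_i = y_i = 0` for `i ≥ M` and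
`x_i^N = y_i^N = 0` for all `i`, then every coefficient of `x + y` is nilpotent and
`(x+y)_i = 0` for all `i ≥ K`, where the bound `K` depends only on `p`, `M`, `N`.
In particular Witt vectors with all coefficients nilpotent and finitely many nonzero
coefficients are closed under addition.
-/

open WittVector

namespace Stmt1Aux

open MvPolynomial Finset

variable (σ : Type) [Fintype σ] [DecidableEq σ]

/-- The submodule of polynomials supported on monomials of total degree `≥ m`
or with some exponent `≥ N`. -/
noncomputable def DD (N m : ℕ) : Submodule ℤ (MvPolynomial σ ℤ) where
  carrier := { u | ∀ d ∈ u.support, m ≤ d.sum (fun _ e => e) ∨ ∃ v, N ≤ d v }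
  zero_mem' := by simp
  add_mem' := by
    intro a b ha hb d hd
    rcases Finset.mem_union.mp (MvPolynomial.support_add hd) with h | h
    exacts [ha d h, hb d h]
  smul_mem' := by
    intro c u hu d hd
    apply hu
    rw [MvPolynomial.mem_support_iff] at hd ⊢
    intro h
    rw [MvPolynomial.coeff_smul, h, smul_zero] at hd
    exact hd rfl

variable {σ}

lemma deg_add (d₁ d₂ : σ →₀ ℕ) :
    (d₁ + d₂).sum (fun _ e => e) = d₁.sum (fun _ e => e) + d₂.sum (fun _ e => e) :=
  Finsupp.sum_add_index' (fun _ => rfl) (fun _ _ _ => rfl)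

lemma mul_mem_DD {N a b : ℕ} {u v : MvPolynomial σ ℤ}
    (hu : u ∈ DD σ N a) (hv : v ∈ DD σ N b) : u * v ∈ DD σ N (a + b) := by
  intro d hd
  obtain ⟨d₁, h₁, d₂, h₂, rfl⟩ := Finset.mem_add.mp (MvPolynomial.support_mul u v hd)
  rcases hu d₁ h₁ with hdeg₁ | ⟨w, hw⟩
  · rcases hv d₂ h₂ with hdeg₂ | ⟨w, hw⟩
    · left
      rw [deg_add]
      omega
    · exact Or.inr ⟨w, by simp only [Finsupp.add_apply]; omega⟩
  · exact Or.inr ⟨w, by simp only [Finsupp.add_apply]; omega⟩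

lemma mem_DD_zero {N : ℕ} (u : MvPolynomial σ ℤ) : u ∈ DD σ N 0 :=
  fun _ _ => Or.inl (Nat.zero_le _)

lemma pow_mem_DD {N a : ℕ} {u : MvPolynomial σ ℤ} (hu : u ∈ DD σ N a) :
    ∀ e, u ^ e ∈ DD σ N (a * e)
  | 0 => by simpa using mem_DD_zero (1 : MvPolynomial σ ℤ)
  | (e + 1) => by
      have h2 := mul_mem_DD (pow_mem_DD hu e) hu
      rw [← pow_succ] at h2
      have heq : a * e + a = a * (e + 1) := by ring
      rwa [heq] at h2

lemma DD_mono {N a b : ℕ} (h : a ≤ b) : DD σ N b ≤ DD σ N a := by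
  intro u hu d hd
  rcases hu d hd with h' | h'
  · exact Or.inl (h.trans h')
  · exact Or.inr h'

lemma DD_of_natCast_mul {N m c : ℕ} (hc : c ≠ 0) {u : MvPolynomial σ ℤ}
    (h : (c : MvPolynomial σ ℤ) * u ∈ DD σ N m) : u ∈ DD σ N m := by
  intro d hd
  apply h d
  rw [MvPolynomial.mem_support_iff] at hd ⊢
  rw [← MvPolynomial.C_eq_coe_nat, MvPolynomial.coeff_C_mul]
  exact mul_ne_zero (Int.natCast_ne_zero.mpr hc) hd

lemma mem_DD_one {N : ℕ} {u : MvPolynomial σ ℤ} (h : constantCoeff u = 0) :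
    u ∈ DD σ N 1 := by
  intro d hd
  left
  by_contra hc
  have hd0 : d = 0 := by
    ext v
    simp only [Finsupp.coe_zero, Pi.zero_apply]
    have hle : d v ≤ d.sum (fun _ e => e) := by
      by_cases hv : v ∈ d.support
      · exact Finset.single_le_sum (f := fun w => d w) (fun _ _ => Nat.zero_le _) hv
      · simp [Finsupp.notMem_support_iff.mp hv]
    omega
  rw [MvPolynomial.mem_support_iff, hd0] at hd
  exact hd h

lemma X_pow_mem_DD {N m e : ℕ} (v : σ) (he : N ≤ e) :
    (X v : MvPolynomial σ ℤ) ^ e ∈ DD σ N m := by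
  intro d hd
  right
  rw [MvPolynomial.X_pow_eq_monomial] at hd
  have := MvPolynomial.support_monomial_subset hd
  rw [Finset.mem_singleton] at this
  subst this
  exact ⟨v, by simp [he]⟩

variable {A : Type} [CommRing A]

lemma aeval_eq_zero_of_DD {N m : ℕ} (hN : 1 ≤ N) (φ : σ → A) (hφ : ∀ v, φ v ^ N = 0)
    {u : MvPolynomial σ ℤ} (hu : u ∈ DD σ N m)
    (hm : Fintype.card σ * (N - 1) + 1 ≤ m) :
    aeval φ u = 0 := by
  conv_lhs => rw [u.as_sum]
  rw [map_sum]
  refine Finset.sum_eq_zero fun d hd => ?_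
  have hv : ∃ v, N ≤ d v := by
    rcases hu d hd with h | h
    · by_contra hc
      push_neg at hc
      have h1 : d.sum (fun _ e => e) ≤ ∑ v : σ, d v :=
        Finset.sum_le_sum_of_subset (Finset.subset_univ _)
      have h2 : ∑ v : σ, d v ≤ ∑ _v : σ, (N - 1) :=
        Finset.sum_le_sum (fun v _ => by have := hc v; omega)
      rw [Finset.sum_const, Finset.card_univ, smul_eq_mul] at h2
      omega
    · exact h
  obtain ⟨v, hv⟩ := hv
  rw [aeval_monomial]
  have hvs : v ∈ d.support := Finsupp.mem_support_iff.mpr (by omega)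
  have hz : d.prod (fun w e => φ w ^ e) = 0 := by
    apply Finset.prod_eq_zero hvs
    show φ v ^ d v = 0
    have : φ v ^ d v = φ v ^ N * φ v ^ (d v - N) := by
      rw [← pow_add]
      congr 1
      omega
    rw [this, hφ, zero_mul]
  rw [hz, mul_zero]

lemma aeval_isNilpotent_of_DD {N : ℕ} (hN : 1 ≤ N) (φ : σ → A) (hφ : ∀ v, φ v ^ N = 0)
    {u : MvPolynomial σ ℤ} (hu : u ∈ DD σ N 1) :
    IsNilpotent (aeval φ u) := by
  conv => rw [u.as_sum]
  rw [map_sum]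
  apply isNilpotent_sum
  intro d hd
  have hv : ∃ v, 1 ≤ d v := by
    rcases hu d hd with h | h
    · by_contra hc
      push_neg at hc
      have : d.sum (fun _ e => e) = 0 :=
        Finset.sum_eq_zero (fun v _ => by show d v = 0; have := hc v; omega)
      omega
    · obtain ⟨v, hv⟩ := h
      exact ⟨v, le_trans hN hv⟩
  obtain ⟨v, hv⟩ := hv
  rw [aeval_monomial]
  have hvs : v ∈ d.support := Finsupp.mem_support_iff.mpr (by omega)
  have hnil : IsNilpotent (φ v ^ d v) :=
    ⟨N, by rw [← pow_mul, mul_comm (d v) N, pow_mul, hφ, zero_pow (by omega)]⟩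
  have : IsNilpotent (d.prod (fun w e => φ w ^ e)) := by
    rw [Finsupp.prod, ← Finset.mul_prod_erase _ _ hvs]
    exact (Commute.all _ _).isNilpotent_mul_right hnil
  exact (Commute.all _ _).isNilpotent_mul_left this

end Stmt1Aux

open Stmt1Aux MvPolynomial Finset

theorem stmt1 (p : ℕ) [hp : Fact p.Prime] (M N : ℕ) (hM : 1 ≤ M) (hN : 1 ≤ N) :
    ∃ K : ℕ, ∀ (A : Type) [CommRing A] (x y : WittVector p A),
      (∀ i, M ≤ i → x.coeff i = 0) → (∀ i, M ≤ i → y.coeff i = 0) →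
      (∀ i, x.coeff i ^ N = 0) → (∀ i, y.coeff i ^ N = 0) →
      (∀ i, IsNilpotent ((x + y).coeff i)) ∧ (∀ i, K ≤ i → (x + y).coeff i = 0) := by
  classical
  have hp2 : 2 ≤ p := hp.out.two_le
  set L : ℕ := 2 * M * (N - 1) + 1 with hL
  have hL1 : 1 ≤ L := by omega
  refine ⟨M + N + L * L, ?_⟩
  intro A _ x y hxM hyM hxN hyN
  set σ : Type := Fin M ⊕ Fin M with hσ
  -- universal Witt vectors
  set xP : WittVector p (MvPolynomial σ ℤ) :=
    WittVector.mk p (fun i => if h : i < M then X (Sum.inl ⟨i, h⟩) else 0) with hxP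
  set yP : WittVector p (MvPolynomial σ ℤ) :=
    WittVector.mk p (fun i => if h : i < M then X (Sum.inr ⟨i, h⟩) else 0) with hyP
  set s : WittVector p (MvPolynomial σ ℤ) := xP + yP with hs
  -- basic powers of p facts
  have hpow_ge : ∀ a : ℕ, a ≤ p ^ a := fun a =>
    le_trans (Nat.le_of_lt (Nat.lt_two_pow_self (n := a))) (Nat.pow_le_pow_left hp2 a)
  -- (i) each coefficient of s has zero constant term
  have hD1 : ∀ n, s.coeff n ∈ DD σ N 1 := by
    intro n
    apply mem_DD_one
    have hmx : WittVector.map (constantCoeff : MvPolynomial σ ℤ →+* ℤ) xP = 0 := by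
      apply WittVector.ext
      intro n
      simp only [WittVector.map_coeff, hxP, WittVector.coeff_mk, WittVector.zero_coeff]
      split <;> simp
    have hmy : WittVector.map (constantCoeff : MvPolynomial σ ℤ →+* ℤ) yP = 0 := by
      apply WittVector.ext
      intro n
      simp only [WittVector.map_coeff, hyP, WittVector.coeff_mk, WittVector.zero_coeff]
      split <;> simp
    have : WittVector.map (constantCoeff : MvPolynomial σ ℤ →+* ℤ) s = 0 := by
      rw [hs, map_add, hmx, hmy, add_zero]
    have := congrArg (fun w => WittVector.coeff w n) this
    simpa [WittVector.map_coeff] using this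
  -- (ii) ghost components of s eventually lie in every DD
  have hGhost : ∀ m n, M + N ≤ n → (WittVector.ghostComponent n s : MvPolynomial σ ℤ) ∈ DD σ N m := by
    intro m n hn
    have hterm : ∀ (z : WittVector p (MvPolynomial σ ℤ)),
        (∀ i, i < M → ∃ v : σ, z.coeff i = X v) → (∀ i, M ≤ i → z.coeff i = 0) →
        WittVector.ghostComponent n z ∈ DD σ N m := by
      intro z hzlt hzge
      rw [WittVector.ghostComponent_apply, aeval_wittPolynomial]
      apply Submodule.sum_mem
      intro i hi
      rw [Finset.mem_range] at hi
      by_cases hiM : i < M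
      · obtain ⟨v, hv⟩ := hzlt i hiM
        rw [hv]
        have he : N ≤ p ^ (n - i) := le_trans (by omega : N ≤ n - i) (hpow_ge _)
        have hX : (X v : MvPolynomial σ ℤ) ^ p ^ (n - i) ∈ DD σ N m := X_pow_mem_DD v he
        have : ((p : MvPolynomial σ ℤ)) ^ i * (X v) ^ p ^ (n - i)
            = ((p : ℤ) ^ i) • ((X v : MvPolynomial σ ℤ)) ^ p ^ (n - i) := by
          rw [zsmul_eq_mul]
          push_cast
          ring
        rw [this]
        exact Submodule.smul_mem _ _ hX
      · rw [hzge i (by omega), zero_pow (by positivity), mul_zero]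
        exact Submodule.zero_mem _
    rw [hs, map_add]
    refine Submodule.add_mem _ ?_ ?_
    · refine hterm xP (fun i hi => ⟨Sum.inl ⟨i, hi⟩, by
        simp only [hxP, WittVector.coeff_mk]
        exact dif_pos hi⟩) ?_
      intro i hi
      simp only [hxP, WittVector.coeff_mk]
      exact dif_neg (Nat.not_lt.mpr hi)
    · refine hterm yP (fun i hi => ⟨Sum.inr ⟨i, hi⟩, by
        simp only [hyP, WittVector.coeff_mk]
        exact dif_pos hi⟩) ?_
      intro i hi
      simp only [hyP, WittVector.coeff_mk]
      exact dif_neg (Nat.not_lt.mpr hi)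
  -- (iii) main induction
  have hMain : ∀ k n, M + N + k * L ≤ n → s.coeff n ∈ DD σ N (min (2 ^ k) L) := by
    intro k
    induction k with
    | zero =>
      intro n _
      have : min (2 ^ 0) L = 1 := by
        simp only [pow_zero]
        omega
      rw [this]
      exact hD1 n
    | succ k ih =>
      intro n hn
      have hkey : (p : MvPolynomial σ ℤ) ^ n * s.coeff n
          = WittVector.ghostComponent n s
            - ∑ i ∈ Finset.range n, (p : MvPolynomial σ ℤ) ^ i * s.coeff i ^ p ^ (n - i) := by
        rw [WittVector.ghostComponent_apply, aeval_wittPolynomial, Finset.sum_range_succ]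
        simp only [Nat.sub_self, pow_zero, pow_one]
        ring
      have hmem : (p : MvPolynomial σ ℤ) ^ n * s.coeff n ∈ DD σ N (min (2 ^ (k + 1)) L) := by
        rw [hkey]
        refine Submodule.sub_mem _ (hGhost _ n (by omega)) (Submodule.sum_mem _ ?_)
        intro i hi
        rw [Finset.mem_range] at hi
        have hterm : s.coeff i ^ p ^ (n - i) ∈ DD σ N (min (2 ^ (k + 1)) L) := by
          by_cases hik : M + N + k * L ≤ i
          · have h1 := pow_mem_DD (ih i hik) (p ^ (n - i))
            refine DD_mono ?_ h1
            have hp2' : 2 ≤ p ^ (n - i) :=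
              le_trans hp2 (Nat.le_self_pow (by omega) p)
            have hmin : min (2 ^ (k + 1)) L ≤ 2 * min (2 ^ k) L := by
              rcases Nat.le_total (2 ^ k) L with h | h
              · calc min (2 ^ (k + 1)) L ≤ 2 ^ (k + 1) := Nat.min_le_left _ _
                  _ = 2 * 2 ^ k := by ring
                  _ = 2 * min (2 ^ k) L := by rw [Nat.min_eq_left h]
              · calc min (2 ^ (k + 1)) L ≤ L := Nat.min_le_right _ _
                  _ ≤ 2 * L := by omega
                  _ = 2 * min (2 ^ k) L := by rw [Nat.min_eq_right h]
            calc min (2 ^ (k + 1)) L ≤ 2 * min (2 ^ k) L := hmin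
              _ ≤ min (2 ^ k) L * p ^ (n - i) := by
                  rw [mul_comm 2 _]
                  exact Nat.mul_le_mul_left _ hp2'
          · have h1 := pow_mem_DD (hD1 i) (p ^ (n - i))
            rw [one_mul] at h1
            refine DD_mono ?_ h1
            have hkL : (k + 1) * L = k * L + L := by ring
            have hni : L ≤ n - i := by omega
            calc min (2 ^ (k + 1)) L ≤ L := Nat.min_le_right _ _
              _ ≤ p ^ L := hpow_ge L
              _ ≤ p ^ (n - i) := Nat.pow_le_pow_right (by omega) hni
        have : (p : MvPolynomial σ ℤ) ^ i * s.coeff i ^ p ^ (n - i)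
            = ((p : ℤ) ^ i) • (s.coeff i ^ p ^ (n - i)) := by
          rw [zsmul_eq_mul]
          push_cast
          ring
        rw [this]
        exact Submodule.smul_mem _ _ hterm
      have hcast : (p : MvPolynomial σ ℤ) ^ n = ((p ^ n : ℕ) : MvPolynomial σ ℤ) := by
        push_cast
        ring
      rw [hcast] at hmem
      exact DD_of_natCast_mul (by positivity) hmem
  -- final: DD L membership for large n
  have hDL : ∀ n, M + N + L * L ≤ n → s.coeff n ∈ DD σ N L := by
    intro n hn
    have h2L : L ≤ 2 ^ L := Nat.le_of_lt (Nat.lt_two_pow_self (n := L))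
    have := hMain L n hn
    rwa [Nat.min_eq_right h2L] at this
  -- transfer to A
  set φ : σ → A := Sum.elim (fun i => x.coeff i.val) (fun i => y.coeff i.val) with hφdef
  have hφN : ∀ v, φ v ^ N = 0 := by
    rintro (i | i)
    · exact hxN i.val
    · exact hyN i.val
  set ψ : MvPolynomial σ ℤ →+* A := (aeval φ : MvPolynomial σ ℤ →ₐ[ℤ] A).toRingHom with hψ
  have hψx : WittVector.map ψ xP = x := by
    apply WittVector.ext
    intro n
    simp only [WittVector.map_coeff, hxP, WittVector.coeff_mk]
    split
    · next h => simp [hψ, hφdef]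
    · next h =>
      rw [map_zero, hxM n (by omega)]
  have hψy : WittVector.map ψ yP = y := by
    apply WittVector.ext
    intro n
    simp only [WittVector.map_coeff, hyP, WittVector.coeff_mk]
    split
    · next h => simp [hψ, hφdef]
    · next h =>
      rw [map_zero, hyM n (by omega)]
  have hcoeff : ∀ n, (x + y).coeff n = aeval φ (s.coeff n) := by
    intro n
    rw [← hψx, ← hψy, ← map_add, WittVector.map_coeff]
    rfl
  have hcard : Fintype.card σ * (N - 1) + 1 ≤ L := by
    have h1 : Fintype.card σ = M + M := by
      show Fintype.card (Fin M ⊕ Fin M) = M + M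
      simp
    have h2 : (M + M) * (N - 1) = 2 * M * (N - 1) := by ring
    rw [h1]
    omega
  constructor
  · intro i
    rw [hcoeff i]
    exact aeval_isNilpotent_of_DD hN φ hφN (hD1 i)
  · intro i hi
    rw [hcoeff i]
    exact aeval_eq_zero_of_DD hN φ hφN (hDL i hi) hcard
end

section
/- The formal completion Ŵ(A) = { a ∈ W(A) : all coefficients a_i are nilpotent and only finitely many are nonzero } is an ideal of the Witt ring W(A): it is an additive subgroup and for every a ∈ W(A) and u ∈ Ŵ(A), the product a·u lies in Ŵ(A). -/
/-!
STATEMENT 2: the formal completion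
`Ŵ(A) = { a ∈ W(A) : all coefficients nilpotent, finitely many nonzero }`
is an ideal of `W(A)`: an additive subgroup closed under multiplication by
arbitrary elements of `W(A)`.
-/

open WittVector

/-- Membership in the formal completion `Ŵ(A)` of the Witt ring. -/
def InWhat (p : ℕ) {A : Type*} [CommRing A] (a : WittVector p A) : Prop :=
  (∀ i, IsNilpotent (a.coeff i)) ∧ ∃ M : ℕ, ∀ i, M ≤ i → a.coeff i = 0

namespace WhatAux

open MvPolynomial

variable {p : ℕ} [hp : Fact p.Prime]

/-- Componentwise scaling of a Witt vector, with weights `r ^ p ^ n`. -/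
noncomputable def scaleFun {R : Type*} [CommRing R] (r : R) (x : WittVector p R) :
    WittVector p R :=
  WittVector.mk p fun n => r ^ p ^ n * x.coeff n

theorem scaleFun_coeff {R : Type*} [CommRing R] (r : R) (x : WittVector p R) (n : ℕ) :
    (scaleFun r x).coeff n = r ^ p ^ n * x.coeff n := rfl

theorem ghostComponent_scaleFun {R : Type*} [CommRing R] (r : R) (x : WittVector p R) (n : ℕ) :
    ghostComponent n (scaleFun r x) = r ^ p ^ n * ghostComponent n x := by
  simp only [ghostComponent_apply, aeval_wittPolynomial]
  rw [Finset.mul_sum]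
  refine Finset.sum_congr rfl fun i hi => ?_
  rw [Finset.mem_range, Nat.lt_succ_iff] at hi
  have hpow : p ^ i * p ^ (n - i) = p ^ n := by
    rw [← pow_add, Nat.add_sub_cancel' hi]
  rw [scaleFun_coeff, mul_pow, ← pow_mul, hpow]
  ring

theorem map_scaleFun {R S : Type*} [CommRing R] [CommRing S] (f : R →+* S) (r : R)
    (x : WittVector p R) : map f (scaleFun r x) = scaleFun (f r) (map f x) := by
  ext n
  simp only [map_coeff, scaleFun_coeff, map_mul, map_pow]

private theorem teichmuller_mul_aux₁ {σ : Type*} (r : MvPolynomial σ ℚ)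
    (x : WittVector p (MvPolynomial σ ℚ)) :
    teichmuller p r * x = scaleFun r x := by
  apply (ghostMap.bijective_of_invertible p (MvPolynomial σ ℚ)).1
  ext n
  simp only [map_mul, Pi.mul_apply, ghostMap_apply, ghostComponent_teichmuller,
    ghostComponent_scaleFun]

private theorem teichmuller_mul_aux₂ {σ : Type*} (r : MvPolynomial σ ℤ)
    (x : WittVector p (MvPolynomial σ ℤ)) :
    teichmuller p r * x = scaleFun r x := by
  refine map_injective (MvPolynomial.map (Int.castRingHom ℚ))
    (MvPolynomial.map_injective _ Int.cast_injective) ?_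
  rw [map_mul, map_teichmuller, map_scaleFun, teichmuller_mul_aux₁]

/-- Multiplication by a Teichmüller representative scales the coefficients. -/
theorem teichmuller_mul_coeff {R : Type*} [CommRing R] (r : R) (x : WittVector p R) (n : ℕ) :
    (teichmuller p r * x).coeff n = r ^ p ^ n * x.coeff n := by
  classical
  let φ : MvPolynomial (Option ℕ) ℤ →+* R :=
    (aeval fun o : Option ℕ => Option.elim o r fun i => x.coeff i).toRingHom
  have h2 : φ (X none) = r := by simp [φ]
  have h1 : map φ (WittVector.mk p fun i => X (some i)) = x := by
    ext i
    simp [map_coeff, φ, WittVector.mk]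
  have key : teichmuller p r * x
      = map φ (teichmuller p (X none) * WittVector.mk p fun i => X (some i)) := by
    rw [map_mul, map_teichmuller, h1, h2]
  rw [key, teichmuller_mul_aux₂, map_coeff, scaleFun_coeff, map_mul, map_pow, h2]
  have : φ ((WittVector.mk p fun i => X (some i)).coeff n) = x.coeff n := by
    simp [φ, WittVector.mk]
  rw [this]

section Subring

variable {R : Type*} [CommRing R] (T : Subring R)

/-- Restriction of a Witt vector with coefficients in a subring. -/
noncomputable def restr (x : WittVector p R) (hx : ∀ i, x.coeff i ∈ T) : WittVector p T :=
  WittVector.mk p fun i => ⟨x.coeff i, hx i⟩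

theorem map_restr (x : WittVector p R) (hx : ∀ i, x.coeff i ∈ T) :
    map T.subtype (restr T x hx) = x := by
  ext i
  simp [map_coeff, restr, WittVector.mk]

theorem map_sub_coeff_mem (w : WittVector p T) (n : ℕ) :
    (map T.subtype w).coeff n ∈ T := by
  rw [map_coeff]
  exact SetLike.coe_mem _

theorem add_coeff_mem (x y : WittVector p R) (hx : ∀ i, x.coeff i ∈ T)
    (hy : ∀ i, y.coeff i ∈ T) (n : ℕ) : (x + y).coeff n ∈ T := by
  rw [← map_restr T x hx, ← map_restr T y hy, ← map_add]
  exact map_sub_coeff_mem T _ n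

theorem neg_coeff_mem (x : WittVector p R) (hx : ∀ i, x.coeff i ∈ T) (n : ℕ) :
    (-x).coeff n ∈ T := by
  rw [← map_restr T x hx, ← map_neg]
  exact map_sub_coeff_mem T _ n

theorem mul_coeff_mem (x y : WittVector p R) (hx : ∀ i, x.coeff i ∈ T)
    (hy : ∀ i, y.coeff i ∈ T) (n : ℕ) : (x * y).coeff n ∈ T := by
  rw [← map_restr T x hx, ← map_restr T y hy, ← map_mul]
  exact map_sub_coeff_mem T _ n

end Subring

section DegIdeal

variable {A : Type*} [CommRing A]

theorem ceilDiv_add_le (c j k : ℕ) : (j + k) ⌈/⌉ c ≤ j ⌈/⌉ c + k ⌈/⌉ c := by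
  rcases Nat.eq_zero_or_pos c with rfl | hc
  · simp
  rw [ceilDiv_le_iff_le_mul hc, mul_add]
  have h1 : j ≤ c * (j ⌈/⌉ c) := by simpa [smul_eq_mul] using le_smul_ceilDiv hc (b := j)
  have h2 : k ≤ c * (k ⌈/⌉ c) := by simpa [smul_eq_mul] using le_smul_ceilDiv hc (b := k)
  omega

/-- The subring of `A[X]` of polynomials whose `j`-th coefficient lies in `I ^ ⌈j/c⌉`. -/
noncomputable def degSubring (I : Ideal A) (c : ℕ) : Subring (Polynomial A) where
  carrier := { f | ∀ j, f.coeff j ∈ I ^ (j ⌈/⌉ c) }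
  zero_mem' := fun j => by simp
  one_mem' := fun j => by
    rcases eq_or_ne j 0 with rfl | h
    · simp
    · simp [Polynomial.coeff_one, h]
  add_mem' := fun hf hg j => by
    rw [Polynomial.coeff_add]
    exact add_mem (hf j) (hg j)
  neg_mem' := fun hf j => by
    rw [Polynomial.coeff_neg]
    exact neg_mem (hf j)
  mul_mem' := fun {f g} hf hg j => by
    rw [Polynomial.coeff_mul]
    refine Submodule.sum_mem _ fun x hx => ?_
    have hx' : x.1 + x.2 = j := Finset.HasAntidiagonal.mem_antidiagonal.mp hx
    have hle : I ^ (x.1 ⌈/⌉ c) * I ^ (x.2 ⌈/⌉ c) ≤ I ^ (j ⌈/⌉ c) := by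
      rw [← pow_add]
      exact Ideal.pow_le_pow_right (by rw [← hx']; exact ceilDiv_add_le c x.1 x.2)
    exact hle (Ideal.mul_mem_mul (hf x.1) (hg x.2))

theorem mem_degSubring_iff (I : Ideal A) (c : ℕ) (f : Polynomial A) :
    f ∈ degSubring I c ↔ ∀ j, f.coeff j ∈ I ^ (j ⌈/⌉ c) := Iff.rfl

theorem C_mem_degSubring (I : Ideal A) (c : ℕ) (a : A) :
    (Polynomial.C a : Polynomial A) ∈ degSubring I c := by
  rw [mem_degSubring_iff]
  intro j
  rcases eq_or_ne j 0 with rfl | h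
  · simp
  · simp [Polynomial.coeff_C, h]

/-- The coefficients of `[X] * map C u` for `u` with coefficients in `I`, supported
below `M`, lie in `degSubring I (p ^ (M - 1))`. -/
theorem good_coeff_mem (I : Ideal A) (M : ℕ) (hM : 0 < M) (u : WittVector p A)
    (huI : ∀ i, u.coeff i ∈ I) (hsup : ∀ i, M ≤ i → u.coeff i = 0) (i : ℕ) :
    (teichmuller p (Polynomial.X : Polynomial A) * map (Polynomial.C : A →+* Polynomial A)
      u).coeff i ∈ degSubring I (p ^ (M - 1)) := by
  rw [teichmuller_mul_coeff, map_coeff, mem_degSubring_iff]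
  intro j
  rw [mul_comm, Polynomial.C_mul_X_pow_eq_monomial, Polynomial.coeff_monomial]
  split_ifs with hj
  · subst hj
    rcases lt_or_ge i M with hiM | hiM
    · have hle : (p ^ i ⌈/⌉ p ^ (M - 1) : ℕ) ≤ 1 := by
        rw [ceilDiv_le_iff_le_mul (Nat.pow_pos hp.out.pos), mul_one]
        exact Nat.pow_le_pow_right hp.out.pos (by omega)
      exact Ideal.pow_le_pow_right hle (by simpa [pow_one] using huI i)
    · rw [hsup i hiM]
      exact zero_mem _
  · exact zero_mem _

/-- Key vanishing lemma. -/
theorem coeff_eq_zero_of_good (I : Ideal A) (K c : ℕ) (hc : 0 < c) (hbot : I ^ K ≤ ⊥)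
    (z : WittVector p A)
    (hz : ∀ i, (teichmuller p (Polynomial.X : Polynomial A)
        * map (Polynomial.C : A →+* Polynomial A) z).coeff i ∈ degSubring I c)
    (n : ℕ) (hn : c * K ≤ p ^ n) : z.coeff n = 0 := by
  have h := hz n
  rw [teichmuller_mul_coeff, map_coeff, mem_degSubring_iff] at h
  have h2 := h (p ^ n)
  rw [mul_comm, Polynomial.C_mul_X_pow_eq_monomial, Polynomial.coeff_monomial, if_pos rfl] at h2
  have hK : K ≤ p ^ n ⌈/⌉ c := by
    have h3 : K ≤ p ^ n / c := (Nat.le_div_iff_mul_le hc).2 (by rw [mul_comm]; exact hn)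
    calc K ≤ p ^ n / c := h3
      _ = p ^ n ⌊/⌋ c := (Nat.floorDiv_eq_div _ _).symm
      _ ≤ p ^ n ⌈/⌉ c := floorDiv_le_ceilDiv
  have : z.coeff n ∈ (⊥ : Ideal A) := hbot (Ideal.pow_le_pow_right hK h2)
  simpa using this

end DegIdeal

section Nilradical

variable {A : Type*} [CommRing A]

theorem map_nilradical_eq_zero (u : WittVector p A) (hu : ∀ i, IsNilpotent (u.coeff i)) :
    map (Ideal.Quotient.mk (nilradical A)) u = 0 := by
  ext i
  rw [map_coeff, zero_coeff, Ideal.Quotient.eq_zero_iff_mem, mem_nilradical]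
  exact hu i

theorem isNilpotent_coeff_of_map_zero (w : WittVector p A)
    (hw : map (Ideal.Quotient.mk (nilradical A)) w = 0) (i : ℕ) : IsNilpotent (w.coeff i) := by
  rw [← mem_nilradical, ← Ideal.Quotient.eq_zero_iff_mem, ← map_coeff]
  rw [hw, zero_coeff]

end Nilradical

end WhatAux

open WhatAux

theorem stmt2 (p : ℕ) [hp : Fact p.Prime] (A : Type*) [CommRing A] :
    InWhat p (0 : WittVector p A) ∧
    (∀ u v : WittVector p A, InWhat p u → InWhat p v → InWhat p (u + v)) ∧
    (∀ u : WittVector p A, InWhat p u → InWhat p (-u)) ∧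
    (∀ (a u : WittVector p A), InWhat p u → InWhat p (a * u)) := by
  have hp2 : 2 ≤ p := hp.out.two_le
  -- a common tool : from `c * K ≤ n` deduce `c * K ≤ p ^ n`
  have hpow : ∀ m n : ℕ, m ≤ n → m ≤ p ^ n := by
    intro m n h
    calc m ≤ n := h
      _ ≤ 2 ^ n := (Nat.lt_two_pow_self).le
      _ ≤ p ^ n := Nat.pow_le_pow_left hp2 n
  refine ⟨⟨fun i => by simp [zero_coeff], 0, fun i _ => zero_coeff p A i⟩, ?_, ?_, ?_⟩
  · -- addition
    rintro u v ⟨hu_nil, Mu, hMu⟩ ⟨hv_nil, Mv, hMv⟩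
    constructor
    · -- nilpotency
      intro i
      apply isNilpotent_coeff_of_map_zero (p := p) (u + v)
      rw [map_add, map_nilradical_eq_zero u hu_nil, map_nilradical_eq_zero v hv_nil, add_zero]
    · -- finite support
      set M : ℕ := max Mu Mv + 1 with hM
      set S : Set A := (fun i => u.coeff i) '' Set.Iio M ∪ (fun i => v.coeff i) '' Set.Iio M
        with hS
      have hSfin : S.Finite := Set.Finite.union
        ((Set.finite_Iio M).image _) ((Set.finite_Iio M).image _)
      set I : Ideal A := Ideal.span S with hI
      have hIrad : I ≤ (⊥ : Ideal A).radical := by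
        rw [hI, Ideal.span_le]
        rintro x (⟨i, _, rfl⟩ | ⟨i, _, rfl⟩)
        · obtain ⟨n, hn⟩ := hu_nil i
          exact ⟨n, by simpa using hn⟩
        · obtain ⟨n, hn⟩ := hv_nil i
          exact ⟨n, by simpa using hn⟩
      obtain ⟨K, hK⟩ := Ideal.exists_pow_le_of_le_radical_of_fg hIrad (Submodule.fg_span hSfin)
      have huI : ∀ i, u.coeff i ∈ I := by
        intro i
        rcases lt_or_ge i M with h | h
        · exact Ideal.subset_span (Or.inl ⟨i, h, rfl⟩)
        · rw [hMu i (by omega)]; exact zero_mem _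
      have hvI : ∀ i, v.coeff i ∈ I := by
        intro i
        rcases lt_or_ge i M with h | h
        · exact Ideal.subset_span (Or.inr ⟨i, h, rfl⟩)
        · rw [hMv i (by omega)]; exact zero_mem _
      refine ⟨p ^ (M - 1) * K, fun n hn => ?_⟩
      refine coeff_eq_zero_of_good I K (p ^ (M - 1)) (Nat.pow_pos hp.out.pos) hK
        (u + v) ?_ n (hpow _ n hn)
      intro i
      have : teichmuller p (Polynomial.X : Polynomial A)
          * map (Polynomial.C : A →+* Polynomial A) (u + v)
          = teichmuller p (Polynomial.X : Polynomial A) * map Polynomial.C u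
            + teichmuller p (Polynomial.X : Polynomial A) * map Polynomial.C v := by
        rw [map_add, mul_add]
      rw [this]
      exact add_coeff_mem _ _ _
        (good_coeff_mem I M (by omega) u huI (fun i hi => hMu i (by omega)))
        (good_coeff_mem I M (by omega) v hvI (fun i hi => hMv i (by omega))) i
  · -- negation
    rintro u ⟨hu_nil, Mu, hMu⟩
    constructor
    · intro i
      apply isNilpotent_coeff_of_map_zero (p := p) (-u)
      rw [map_neg, map_nilradical_eq_zero u hu_nil, neg_zero]
    · set M : ℕ := Mu + 1 with hM
      set S : Set A := (fun i => u.coeff i) '' Set.Iio M with hS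
      have hSfin : S.Finite := (Set.finite_Iio M).image _
      set I : Ideal A := Ideal.span S with hI
      have hIrad : I ≤ (⊥ : Ideal A).radical := by
        rw [hI, Ideal.span_le]
        rintro x ⟨i, _, rfl⟩
        obtain ⟨n, hn⟩ := hu_nil i
        exact ⟨n, by simpa using hn⟩
      obtain ⟨K, hK⟩ := Ideal.exists_pow_le_of_le_radical_of_fg hIrad (Submodule.fg_span hSfin)
      have huI : ∀ i, u.coeff i ∈ I := by
        intro i
        rcases lt_or_ge i M with h | h
        · exact Ideal.subset_span ⟨i, h, rfl⟩
        · rw [hMu i (by omega)]; exact zero_mem _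
      refine ⟨p ^ (M - 1) * K, fun n hn => ?_⟩
      refine coeff_eq_zero_of_good I K (p ^ (M - 1)) (Nat.pow_pos hp.out.pos) hK
        (-u) ?_ n (hpow _ n hn)
      intro i
      have : teichmuller p (Polynomial.X : Polynomial A)
          * map (Polynomial.C : A →+* Polynomial A) (-u)
          = -(teichmuller p (Polynomial.X : Polynomial A) * map Polynomial.C u) := by
        rw [map_neg, mul_neg]
      rw [this]
      exact neg_coeff_mem _ _
        (good_coeff_mem I M (by omega) u huI (fun i hi => hMu i (by omega))) i
  · -- multiplication by an arbitrary element
    rintro a u ⟨hu_nil, Mu, hMu⟩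
    constructor
    · intro i
      apply isNilpotent_coeff_of_map_zero (p := p) (a * u)
      rw [map_mul, map_nilradical_eq_zero u hu_nil, mul_zero]
    · set M : ℕ := Mu + 1 with hM
      set S : Set A := (fun i => u.coeff i) '' Set.Iio M with hS
      have hSfin : S.Finite := (Set.finite_Iio M).image _
      set I : Ideal A := Ideal.span S with hI
      have hIrad : I ≤ (⊥ : Ideal A).radical := by
        rw [hI, Ideal.span_le]
        rintro x ⟨i, _, rfl⟩
        obtain ⟨n, hn⟩ := hu_nil i
        exact ⟨n, by simpa using hn⟩
      obtain ⟨K, hK⟩ := Ideal.exists_pow_le_of_le_radical_of_fg hIrad (Submodule.fg_span hSfin)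
      have huI : ∀ i, u.coeff i ∈ I := by
        intro i
        rcases lt_or_ge i M with h | h
        · exact Ideal.subset_span ⟨i, h, rfl⟩
        · rw [hMu i (by omega)]; exact zero_mem _
      refine ⟨p ^ (M - 1) * K, fun n hn => ?_⟩
      refine coeff_eq_zero_of_good I K (p ^ (M - 1)) (Nat.pow_pos hp.out.pos) hK
        (a * u) ?_ n (hpow _ n hn)
      intro i
      have : teichmuller p (Polynomial.X : Polynomial A)
          * map (Polynomial.C : A →+* Polynomial A) (a * u)
          = map Polynomial.C a
            * (teichmuller p (Polynomial.X : Polynomial A) * map Polynomial.C u) := by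
        rw [map_mul, mul_left_comm]
      rw [this]
      refine mul_coeff_mem _ _ _ (fun j => ?_)
        (good_coeff_mem I M (by omega) u huI (fun i hi => hMu i (by omega))) i
      rw [map_coeff]
      exact C_mem_degSubring I _ _
end

section
/- Let A be a commutative ring. If a ∈ W(A) has only finitely many nonzero coefficients (no nilpotency assumption) and x ∈ Ŵ(A) (all coefficients nilpotent, finitely many nonzero), then T_a(x) = Σ_{r≥0} V^r([a_r]·x) lies in Ŵ(A). -/
/-!
STATEMENT 4: if `a ∈ W(A)` has finitely many nonzero coefficients and
`x ∈ Ŵ(A)`, then `T_a(x) = Σ_{r≥0} V^r([a_r]·x)` lies in `Ŵ(A)`.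
The infinite sum is defined coefficientwise (it stabilizes).
-/

open WittVector

set_option linter.unusedSectionVars false


namespace Stmt4Aux

open MvPolynomial

variable (p : ℕ) [hp : Fact p.Prime]

/-- Coefficientwise scaling `[a]·x`. -/
noncomputable def scale {R : Type*} [CommRing R] (a : R) (x : WittVector p R) : WittVector p R :=
  WittVector.mk p fun n => a ^ p ^ n * x.coeff n

variable {R S : Type*} [CommRing R] [CommRing S]

lemma scale_coeff (a : R) (x : WittVector p R) (n : ℕ) :
    (scale p a x).coeff n = a ^ p ^ n * x.coeff n := rfl

lemma map_scale (f : R →+* S) (a : R) (x : WittVector p R) :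
    WittVector.map f (scale p a x) = scale p (f a) (WittVector.map f x) := by
  ext n
  simp [scale_coeff, WittVector.map_coeff]

lemma ghostComponent_scale (a : R) (x : WittVector p R) (n : ℕ) :
    WittVector.ghostComponent n (scale p a x) = a ^ p ^ n * WittVector.ghostComponent n x := by
  simp only [ghostComponent_apply, aeval_wittPolynomial, Finset.mul_sum]
  refine Finset.sum_congr rfl fun i hi => ?_
  have hi' : i ≤ n := Nat.lt_succ_iff.mp (Finset.mem_range.mp hi)
  rw [scale_coeff, mul_pow, ← pow_mul, ← pow_add, Nat.add_sub_cancel' hi']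
  ring

private lemma key_aux₁ {S : Type*} (a : MvPolynomial S ℚ) (x : WittVector p (MvPolynomial S ℚ)) :
    teichmuller p a * x = scale p a x := by
  apply (ghostMap.bijective_of_invertible p (MvPolynomial S ℚ)).1
  funext n
  rw [_root_.map_mul]
  simp [ghostMap_apply, ghostComponent_teichmuller, ghostComponent_scale]

private lemma key_aux₂ {S : Type*} (a : MvPolynomial S ℤ) (x : WittVector p (MvPolynomial S ℤ)) :
    teichmuller p a * x = scale p a x := by
  refine map_injective (MvPolynomial.map (Int.castRingHom ℚ))
    (MvPolynomial.map_injective _ Int.cast_injective) ?_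
  rw [_root_.map_mul, map_teichmuller, map_scale, key_aux₁]

lemma teichmuller_mul (a : R) (x : WittVector p R) :
    teichmuller p a * x = scale p a x := by
  have h := key_aux₂ p (X a : MvPolynomial R ℤ)
    (WittVector.mk p fun n => X (x.coeff n))
  have h2 := congrArg (WittVector.map (MvPolynomial.counit R)) h
  rw [_root_.map_mul, map_teichmuller, map_scale, counit_X] at h2
  have hx : WittVector.map (MvPolynomial.counit R) (WittVector.mk p fun n => X (x.coeff n)) = x := by
    ext n
    simp [WittVector.map_coeff, WittVector.coeff_mk, counit_X]
  rwa [hx] at h2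

lemma teichmuller_mul_coeff (a : R) (x : WittVector p R) (n : ℕ) :
    (teichmuller p a * x).coeff n = a ^ p ^ n * x.coeff n := by
  rw [teichmuller_mul]; rfl

lemma iterate_verschiebung_coeff_eq_zero (x : WittVector p R) {i r : ℕ} (h : i < r) :
    ((verschiebung)^[r] x).coeff i = 0 := by
  induction r generalizing i with
  | zero => omega
  | succ r ih =>
    rw [Function.iterate_succ_apply']
    match i with
    | 0 => exact verschiebung_coeff_zero _
    | Nat.succ i =>
      rw [verschiebung_coeff_succ]
      exact ih (by omega)

end Stmt4Aux

namespace Stmt4Aux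

variable {A : Type*} [CommRing A]

lemma ceilDiv_add_le (w a b : ℕ) (hw : 0 < w) : (a + b) ⌈/⌉ w ≤ a ⌈/⌉ w + b ⌈/⌉ w := by
  rw [ceilDiv_le_iff_le_smul hw, smul_add]
  exact add_le_add (le_smul_ceilDiv hw) (le_smul_ceilDiv hw)

/-- The subring of `A[X]` of polynomials whose `j`-th coefficient lies in `I ^ ⌈j/w⌉`. -/
def filtSubring (I : Ideal A) (w : ℕ) (hw : 0 < w) : Subring (Polynomial A) where
  carrier := {q | ∀ j, q.coeff j ∈ I ^ (j ⌈/⌉ w)}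
  zero_mem' := fun j => by simp
  one_mem' := fun j => by
    match j with
    | 0 => simp [Ideal.one_eq_top]
    | Nat.succ j => simp [Polynomial.coeff_one]
  add_mem' := fun {q₁ q₂} h1 h2 j => by
    rw [Polynomial.coeff_add]; exact add_mem (h1 j) (h2 j)
  neg_mem' := fun {q} h j => by
    rw [Polynomial.coeff_neg]; exact neg_mem (h j)
  mul_mem' := fun {q₁ q₂} h1 h2 j => by
    rw [Polynomial.coeff_mul]
    refine Ideal.sum_mem _ fun c hc => ?_
    have hcj : c.1 + c.2 = j := Finset.HasAntidiagonal.mem_antidiagonal.mp hc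
    have hmem : q₁.coeff c.1 * q₂.coeff c.2 ∈ I ^ (c.1 ⌈/⌉ w + c.2 ⌈/⌉ w) := by
      rw [pow_add]
      exact Ideal.mul_mem_mul (h1 c.1) (h2 c.2)
    refine Ideal.pow_le_pow_right ?_ hmem
    rw [← hcj]
    exact ceilDiv_add_le w c.1 c.2 hw

lemma mem_filtSubring {I : Ideal A} {w : ℕ} {hw : 0 < w} {q : Polynomial A} :
    q ∈ filtSubring I w hw ↔ ∀ j, q.coeff j ∈ I ^ (j ⌈/⌉ w) := Iff.rfl

end Stmt4Aux


noncomputable def Tmap (p : ℕ) [hp : Fact p.Prime] {R : Type*} [CommRing R]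
    (a x : WittVector p R) : WittVector p R :=
  WittVector.mk p fun n =>
    (∑ r ∈ Finset.range (n + 1),
      (WittVector.verschiebung)^[r] (WittVector.teichmuller p (a.coeff r) * x)).coeff n

open Stmt4Aux

theorem stmt4 (p : ℕ) [hp : Fact p.Prime] (A : Type*) [CommRing A]
    (a x : WittVector p A) (ha : ∃ M : ℕ, ∀ i, M ≤ i → a.coeff i = 0)
    (hx : InWhat p x) : InWhat p (Tmap p a x) := by
  classical
  obtain ⟨M, hM⟩ := ha
  obtain ⟨hxnil, N, hN⟩ := hx
  set t : ℕ → WittVector p A :=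
    fun r => (verschiebung)^[r] (teichmuller p (a.coeff r) * x) with ht
  have hiter0 : ∀ r, (verschiebung)^[r] (0 : WittVector p A) = 0 := by
    intro r
    induction r with
    | zero => rfl
    | succ r ih => rw [Function.iterate_succ_apply', ih]; exact map_zero _
  have ht0 : ∀ r, M ≤ r → t r = 0 := by
    intro r hr
    rw [ht]
    simp only [hM r hr, teichmuller_zero, zero_mul, hiter0]
  have htcoeff : ∀ r i, (t r).coeff (i + r) = a.coeff r ^ p ^ i * x.coeff i := by
    intro r i
    rw [ht]
    simp only
    rw [iterate_verschiebung_coeff, teichmuller_mul_coeff]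
  have htlow : ∀ r i, i < r → (t r).coeff i = 0 := by
    intro r i h
    exact iterate_verschiebung_coeff_eq_zero p _ h
  have htsupp : ∀ r i, N + M ≤ i → (t r).coeff i = 0 := by
    intro r i hi
    rcases le_or_gt M r with hr | hr
    · rw [ht0 r hr, zero_coeff]
    · have hri : r ≤ i := le_trans (le_of_lt hr) (le_trans (Nat.le_add_left M N) hi)
      obtain ⟨d, rfl⟩ := Nat.exists_eq_add_of_le hri
      rw [add_comm r d, htcoeff, hN d (by omega), mul_zero]
  -- Step A : Tmap equals the finite sum over `range M`
  have hTmap : Tmap p a x = ∑ r ∈ Finset.range M, t r := by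
    ext n
    show (∑ r ∈ Finset.range (n + 1), t r).coeff n = (∑ r ∈ Finset.range M, t r).coeff n
    have key : ∀ u : WittVector p A,
        u.coeff n = (truncate (n + 1) u).coeff ⟨n, Nat.lt_succ_self n⟩ :=
      fun u => (coeff_truncate u ⟨n, Nat.lt_succ_self n⟩).symm
    rw [key, key]
    congr 1
    have hz : ∀ r, n + 1 ≤ r → truncate (p := p) (R := A) (n + 1) (t r) = 0 := by
      intro r hr
      ext i
      rw [coeff_truncate]
      simp [htlow r i (lt_of_lt_of_le i.2 hr)]
    simp only [map_sum]
    have h1 : ∑ r ∈ Finset.range (n + 1), truncate (n + 1) (t r) =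
        ∑ r ∈ Finset.range (max (n + 1) M), truncate (n + 1) (t r) := by
      refine Finset.sum_subset (Finset.range_subset_range.2 (le_max_left _ _)) ?_
      intro r _ hrn
      exact hz r (le_of_not_gt fun h => hrn (Finset.mem_range.2 h))
    have h2 : ∑ r ∈ Finset.range M, truncate (n + 1) (t r) =
        ∑ r ∈ Finset.range (max (n + 1) M), truncate (n + 1) (t r) := by
      refine Finset.sum_subset (Finset.range_subset_range.2 (le_max_right _ _)) ?_
      intro r _ hrM
      rw [ht0 r (le_of_not_gt fun h => hrM (Finset.mem_range.2 h))]
      exact map_zero _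
    rw [h1, h2]
  rw [hTmap]
  -- Step B : membership of the finite sum
  set S : WittVector p A := ∑ r ∈ Finset.range M, t r with hS
  set I : Ideal A := Ideal.span ((Finset.range N).image x.coeff : Finset A) with hI
  have hxI : ∀ j, x.coeff j ∈ I := by
    intro j
    by_cases hj : j < N
    · exact Ideal.subset_span (by
        simp only [Finset.coe_image, Set.mem_image, Finset.mem_coe, Finset.mem_range]
        exact ⟨j, hj, rfl⟩)
    · rw [hN j (le_of_not_gt hj)]; exact I.zero_mem
  have htI : ∀ r i, (t r).coeff i ∈ I := by
    intro r i
    rcases lt_or_ge i r with h | h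
    · rw [htlow r i h]; exact I.zero_mem
    · obtain ⟨d, rfl⟩ := Nat.exists_eq_add_of_le h
      rw [add_comm r d, htcoeff]
      exact I.mul_mem_left _ (hxI d)
  have hInil : I ≤ nilradical A := by
    rw [hI, Ideal.span_le]
    intro y hy
    simp only [Finset.coe_image, Set.mem_image, Finset.mem_coe, Finset.mem_range] at hy
    obtain ⟨j, _, rfl⟩ := hy
    exact hxnil j
  have hIfg : I.FG := ⟨(Finset.range N).image x.coeff, rfl⟩
  obtain ⟨k, hk⟩ : ∃ k, I ^ k ≤ ⊥ := by
    exact Ideal.exists_pow_le_of_le_radical_of_fg hInil hIfg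
  set w : ℕ := p ^ (N + M) with hwdef
  have hw : 0 < w := pow_pos hp.out.pos _
  set R' := filtSubring I w hw with hR'
  have hmemu : ∀ r i,
      (Polynomial.C ((t r).coeff i) * Polynomial.X ^ (p ^ i) : Polynomial A) ∈ R' := by
    intro r i
    rw [hR', mem_filtSubring]
    intro j
    rw [Polynomial.coeff_C_mul, Polynomial.coeff_X_pow]
    by_cases hiNM : N + M ≤ i
    · rw [htsupp r i hiNM, zero_mul]
      exact zero_mem _
    by_cases hj : j = p ^ i
    · subst hj
      rw [if_pos rfl, mul_one]
      have hle : p ^ i ⌈/⌉ w ≤ 1 := by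
        rw [ceilDiv_le_iff_le_smul hw, smul_eq_mul, mul_one, hwdef]
        exact Nat.pow_le_pow_right hp.out.one_lt.le (le_of_not_ge hiNM)
      refine Ideal.pow_le_pow_right hle ?_
      rw [pow_one]
      exact htI r i
    · rw [if_neg hj, mul_zero]
      exact zero_mem _
  let u : ℕ → WittVector p R' := fun r => WittVector.mk p fun i =>
    ⟨Polynomial.C ((t r).coeff i) * Polynomial.X ^ (p ^ i), hmemu r i⟩
  have humap : ∀ r, WittVector.map R'.subtype (u r) =
      teichmuller p Polynomial.X * WittVector.map (Polynomial.C : A →+* Polynomial A) (t r) := by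
    intro r
    refine WittVector.ext fun i => ?_
    rw [WittVector.map_coeff, teichmuller_mul_coeff, WittVector.map_coeff]
    exact mul_comm (Polynomial.C ((t r).coeff i)) (Polynomial.X ^ p ^ i)
  have hsum : WittVector.map R'.subtype (∑ r ∈ Finset.range M, u r) =
      teichmuller p Polynomial.X * WittVector.map (Polynomial.C : A →+* Polynomial A) S := by
    calc WittVector.map R'.subtype (∑ r ∈ Finset.range M, u r)
        = ∑ r ∈ Finset.range M, (teichmuller p Polynomial.X *
            WittVector.map (Polynomial.C : A →+* Polynomial A) (t r)) := by
          rw [map_sum]; simp only [humap]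
      _ = teichmuller p Polynomial.X * ∑ r ∈ Finset.range M,
            WittVector.map (Polynomial.C : A →+* Polynomial A) (t r) :=
          (Finset.mul_sum _ _ _).symm
      _ = teichmuller p Polynomial.X *
            WittVector.map (Polynomial.C : A →+* Polynomial A) S := by
          rw [hS, map_sum]
  have hSmem : ∀ n, S.coeff n ∈ I ^ (p ^ n ⌈/⌉ w) := by
    intro n
    have hmem : ((teichmuller p Polynomial.X *
        WittVector.map (Polynomial.C : A →+* Polynomial A) S).coeff n) ∈ R' := by
      rw [← hsum, WittVector.map_coeff]
      exact SetLike.coe_mem _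
    have h := (mem_filtSubring.mp hmem) (p ^ n)
    rw [teichmuller_mul_coeff, WittVector.map_coeff, mul_comm, Polynomial.coeff_C_mul,
      Polynomial.coeff_X_pow, if_pos rfl, mul_one] at h
    exact h
  constructor
  · intro n
    have h1 : (1 : ℕ) ≤ p ^ n ⌈/⌉ w := by
      by_contra hcon
      have h0 : p ^ n ⌈/⌉ w ≤ 0 := by omega
      have h2 := (ceilDiv_le_iff_le_smul hw).1 h0
      rw [smul_eq_mul, mul_zero] at h2
      have := pow_pos hp.out.pos n
      omega
    have h3 := Ideal.pow_le_pow_right h1 (hSmem n)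
    rw [pow_one] at h3
    rw [← mem_nilradical]
    exact hInil h3
  · refine ⟨k * w + 1, fun n hn => ?_⟩
    have hnp : n < p ^ n := Nat.lt_pow_self hp.out.one_lt
    have hke : k ≤ p ^ n ⌈/⌉ w := by
      by_contra hcon
      push_neg at hcon
      have h2 := (ceilDiv_le_iff_le_smul hw).1 (Nat.le_pred_of_lt hcon)
      rw [smul_eq_mul] at h2
      have h3 : w * k.pred ≤ w * k := Nat.mul_le_mul_left _ (Nat.pred_le _)
      have h4 : w * k = k * w := Nat.mul_comm _ _
      omega
    have h5 := Ideal.pow_le_pow_right hke (hSmem n)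
    have h6 := hk h5
    simpa using h6
end

section
/- Let L, M, N ≥ 1 be integers. In the quotient of Z_{(p)}[Λ, U_0, U_1, ...] by the ideal generated by Λ^L, U_0^N, ..., U_{M−1}^N, U_M, U_{M+1}, ..., the image of the deformed Artin–Hasse exponential E_p(U, Λ, T) = Π_{ℓ≥0} E_p(U_ℓ, Λ^{p^ℓ}, T^{p^ℓ}) is a polynomial in T of degree at most (N−1)(p^M−1)/(p−1) + (L−1). -/
/-! The subring `ℤ_{(p)} ⊆ ℚ` of `p`-integral rationals; a "ℤ_{(p)}-algebra" is a
commutative ring equipped with an algebra structure over this subring. -/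

/-- The subring `ℤ_{(p)}` of `ℚ` consisting of rationals with denominator prime to `p`. -/
def Zploc (p : ℕ) (hp : p.Prime) : Subring ℚ where
  carrier := {q : ℚ | ¬ p ∣ q.den}
  zero_mem' := by simp [Rat.den_ofNat, hp.one_lt.ne', Nat.dvd_one]
  one_mem' := by simp [Rat.den_ofNat, hp.one_lt.ne', Nat.dvd_one]
  add_mem' := by
    intro a b ha hb h
    rcases (Nat.Prime.dvd_mul hp).1 (h.trans (Rat.add_den_dvd a b)) with h' | h'
    exacts [ha h', hb h']
  mul_mem' := by
    intro a b ha hb h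
    rcases (Nat.Prime.dvd_mul hp).1 (h.trans (Rat.mul_den_dvd a b)) with h' | h'
    exacts [ha h', hb h']
  neg_mem' := by intro a ha; simpa [Rat.neg_den] using ha

/-- Specialization of a rational number into a `ℤ_{(p)}`-algebra `A`,
defined (with junk value `0`) when the rational is `p`-integral. -/
noncomputable def padicSpec (p : ℕ) (hp : p.Prime) {A : Type*} [CommRing A]
    [Algebra (Zploc p hp) A] (q : ℚ) : A :=
  if h : ¬ p ∣ q.den then algebraMap (Zploc p hp) A ⟨q, h⟩ else 0

/-- Specialization of a multivariate polynomial with rational (`p`-integral)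
coefficients at a point of a `ℤ_{(p)}`-algebra `A`. -/
noncomputable def specPoly (p : ℕ) (hp : p.Prime) {A : Type*} [CommRing A]
    [Algebra (Zploc p hp) A] {σ : Type*} (P : MvPolynomial σ ℚ) (v : σ → A) : A :=
  ∑ m ∈ P.support, padicSpec p hp (MvPolynomial.coeff m P) * m.prod (fun i k => v i ^ k)

/-! The universal deformed Artin–Hasse exponential
`E_p(𝐔, Λ, T) = Π_{ℓ≥0} E_p(U_ℓ, Λ^{p^ℓ}, T^{p^ℓ})` has coefficients in
`ℤ_{(p)}[Λ, U_0, U_1, …]`.  We realize each coefficient as a polynomial in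
`ℚ[Λ, U_0, U_1, …]` via the identity `E_p = exp (log E_p)`, where
`log E_p(U,Λ,T) = Σ_{k≥0} Σ_{m≥1} ((−1)^{m−1}/(m·p^k))·c_{k,m}·T^{p^k m}` with
`c_{0,m} = U·Λ^{m−1}` and, for `k ≥ 1`,
`c_{k,m} = U^{p^k} Λ^{p^k(m−1)} − U^{p^{k−1}} Λ^{p^{k−1}(pm−1)}`
(these are polynomials), and then specialize the (p-integral) rational
coefficients into an arbitrary `ℤ_{(p)}`-algebra. -/

/-- Coefficient of `T^j` in `log E_p(u, λ, T)` over a `ℚ`-algebra. -/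
noncomputable def logEpCoeff (p : ℕ) {A : Type*} [CommRing A] [Algebra ℚ A]
    (u lam : A) (j : ℕ) : A :=
  if j = 0 then 0 else
    ∑ k ∈ Finset.range (j + 1),
      if p ^ k ∣ j then
        ((-1 : ℚ) ^ (j / p ^ k - 1) / ((j / p ^ k) * p ^ k)) •
          (if k = 0 then u * lam ^ (j - 1)
           else u ^ p ^ k * lam ^ (p ^ k * (j / p ^ k - 1)) -
                u ^ p ^ (k - 1) * lam ^ (p ^ (k - 1) * (p * (j / p ^ k) - 1)))
      else 0

/-- The power series `log E_p(𝐔, Λ, T) = Σ_ℓ (log E_p)(U_ℓ, Λ^{p^ℓ}, T^{p^ℓ})`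
over `ℚ[Λ, U_0, U_1, …]` (with `Λ` the variable `none` and `U_ℓ` the variable
`some ℓ`). -/
noncomputable def logEpVec (p : ℕ) : PowerSeries (MvPolynomial (Option ℕ) ℚ) :=
  PowerSeries.mk fun j =>
    ∑ l ∈ Finset.range (j + 1),
      if p ^ l ∣ j then
        logEpCoeff p (MvPolynomial.X (some l)) (MvPolynomial.X none ^ p ^ l) (j / p ^ l)
      else 0

/-- The coefficient of `T^n` in `E_p(𝐔, Λ, T) = exp (log E_p(𝐔, Λ, T))`, as a
polynomial in `ℚ[Λ, U_0, U_1, …]` (its rational coefficients are `p`-integral). -/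
noncomputable def EpVecCoeff (p n : ℕ) : MvPolynomial (Option ℕ) ℚ :=
  ∑ t ∈ Finset.range (n + 1),
    ((t.factorial : ℚ)⁻¹) • PowerSeries.coeff n (logEpVec p ^ t)

/-- The deformed Artin–Hasse exponential `E_p(a, λ, T)` for a vector `a` and an
element `λ` of an arbitrary `ℤ_{(p)}`-algebra `A`, obtained by specialization of
the universal series. -/
noncomputable def EpZ (p : ℕ) (hp : p.Prime) {A : Type*} [CommRing A]
    [Algebra (Zploc p hp) A] (a : ℕ → A) (lam : A) : PowerSeries A :=
  PowerSeries.mk fun n => specPoly p hp (EpVecCoeff p n) (fun v => v.elim lam a)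

/-!
STATEMENT 12: in the quotient of `ℤ_{(p)}[Λ, U_0, U_1, …]` by the ideal generated
by `Λ^L, U_0^N, …, U_{M−1}^N, U_M, U_{M+1}, …`, the image of `E_p(𝐔, Λ, T)` is a
polynomial in `T` of degree at most `(N−1)(p^M−1)/(p−1) + (L−1)`
(we write `(p^M−1)/(p−1) = Σ_{i<M} p^i`). -/

set_option synthInstance.maxHeartbeats 1000000
set_option maxHeartbeats 1000000


section Stmt12Aux

open MvPolynomial

/-- The weight function: `Λ` has weight `1`, `U_ℓ` has weight `p^ℓ`. -/
private def wdeg (p : ℕ) : Option ℕ → ℕ := fun o => o.elim 1 (p ^ ·)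

@[simp] private lemma wdeg_none (p : ℕ) : wdeg p none = 1 := rfl
@[simp] private lemma wdeg_some (p l : ℕ) : wdeg p (some l) = p ^ l := rfl

private lemma wh_pow {σ : Type*} {w : σ → ℕ} {φ : MvPolynomial σ ℚ} {m : ℕ}
    (h : IsWeightedHomogeneous w φ m) (t : ℕ) :
    IsWeightedHomogeneous w (φ ^ t) (t * m) := by
  induction t with
  | zero => simpa using isWeightedHomogeneous_one ℚ w
  | succ t ih =>
      have := ih.mul h
      rwa [← pow_succ, ← Nat.succ_mul] at this

private lemma wh_smul {σ : Type*} {w : σ → ℕ} {φ : MvPolynomial σ ℚ} {m : ℕ} (c : ℚ)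
    (h : IsWeightedHomogeneous w φ m) : IsWeightedHomogeneous w (c • φ) m :=
  (weightedHomogeneousSubmodule ℚ w m).smul_mem c h

private lemma wh_sub {σ : Type*} {w : σ → ℕ} {φ ψ : MvPolynomial σ ℚ} {m : ℕ}
    (h : IsWeightedHomogeneous w φ m) (h' : IsWeightedHomogeneous w ψ m) :
    IsWeightedHomogeneous w (φ - ψ) m :=
  (weightedHomogeneousSubmodule ℚ w m).sub_mem h h'

private lemma logEpCoeff_hom (p : ℕ) (hp : 1 ≤ p) (l j : ℕ) :
    IsWeightedHomogeneous (wdeg p)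
      (logEpCoeff p (X (some l)) (X none ^ p ^ l) j : MvPolynomial (Option ℕ) ℚ)
      (p ^ l * j) := by
  unfold logEpCoeff
  split_ifs with hj
  · subst hj; simpa using isWeightedHomogeneous_zero ℚ (wdeg p) _
  apply IsWeightedHomogeneous.sum
  intro k _
  split_ifs with hk hk0
  · -- k = 0, p^k ∣ j
    subst hk0
    apply wh_smul
    obtain ⟨j', rfl⟩ : ∃ j', j = j' + 1 := ⟨j - 1, by omega⟩
    have h1 : IsWeightedHomogeneous (wdeg p) (X (some l) : MvPolynomial (Option ℕ) ℚ)
        (p ^ l) := isWeightedHomogeneous_X ℚ _ _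
    have h2 : IsWeightedHomogeneous (wdeg p)
        ((X none ^ p ^ l : MvPolynomial (Option ℕ) ℚ) ^ (j' + 1 - 1)) (j' * (p ^ l * 1)) := by
      simpa using wh_pow (wh_pow (isWeightedHomogeneous_X ℚ (wdeg p) none) (p ^ l)) j'
    have := h1.mul h2
    rwa [show p ^ l + j' * (p ^ l * 1) = p ^ l * (j' + 1) by ring] at this
  · -- k ≠ 0, p^k ∣ j
    apply wh_smul
    obtain ⟨d, hd⟩ := hk
    have hpk : 0 < p ^ k := Nat.pow_pos (n := k) hp
    have hjd : j / p ^ k = d := by rw [hd]; exact Nat.mul_div_cancel_left d hpk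
    subst hd
    rw [hjd]
    obtain ⟨d', rfl⟩ : ∃ d', d = d' + 1 := ⟨d - 1, by
      have : d ≠ 0 := by rintro rfl; simp at hj
      omega⟩
    obtain ⟨k', rfl⟩ : ∃ k', k = k' + 1 := ⟨k - 1, by omega⟩
    apply wh_sub
    · have h1 : IsWeightedHomogeneous (wdeg p)
          ((X (some l) : MvPolynomial (Option ℕ) ℚ) ^ p ^ (k' + 1)) (p ^ (k' + 1) * p ^ l) := by
        simpa using wh_pow (isWeightedHomogeneous_X ℚ (wdeg p) (some l)) (p ^ (k' + 1))
      have h2 : IsWeightedHomogeneous (wdeg p)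
          ((X none ^ p ^ l : MvPolynomial (Option ℕ) ℚ) ^ (p ^ (k' + 1) * (d' + 1 - 1)))
          ((p ^ (k' + 1) * d') * (p ^ l * 1)) := by
        simpa using wh_pow (wh_pow (isWeightedHomogeneous_X ℚ (wdeg p) none) (p ^ l))
          (p ^ (k' + 1) * d')
      have := h1.mul h2
      rwa [show p ^ (k' + 1) * p ^ l + (p ^ (k' + 1) * d') * (p ^ l * 1)
          = p ^ l * (p ^ (k' + 1) * (d' + 1)) by ring] at this
    · have hpd : 1 ≤ p * (d' + 1) := Nat.one_le_iff_ne_zero.2 (by positivity)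
      obtain ⟨e, he⟩ : ∃ e, p * (d' + 1) = e + 1 := ⟨p * (d' + 1) - 1, by omega⟩
      have h1 : IsWeightedHomogeneous (wdeg p)
          ((X (some l) : MvPolynomial (Option ℕ) ℚ) ^ p ^ (k' + 1 - 1)) (p ^ k' * p ^ l) := by
        simpa using wh_pow (isWeightedHomogeneous_X ℚ (wdeg p) (some l)) (p ^ k')
      have h2 : IsWeightedHomogeneous (wdeg p)
          ((X none ^ p ^ l : MvPolynomial (Option ℕ) ℚ) ^ (p ^ (k' + 1 - 1) * (p * (d' + 1) - 1)))
          ((p ^ k' * e) * (p ^ l * 1)) := by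
        simpa [he] using wh_pow (wh_pow (isWeightedHomogeneous_X ℚ (wdeg p) none) (p ^ l))
          (p ^ k' * e)
      have := h1.mul h2
      rw [show p ^ k' * p ^ l + (p ^ k' * e) * (p ^ l * 1) = p ^ l * (p ^ k' * (e + 1)) by ring]
        at this
      rwa [← he, show p ^ l * (p ^ k' * (p * (d' + 1))) = p ^ l * (p ^ (k' + 1) * (d' + 1))
        by rw [pow_succ]; ring] at this
  · exact isWeightedHomogeneous_zero ℚ _ _

private lemma logEpVec_hom (p : ℕ) (hp : 1 ≤ p) (j : ℕ) :
    IsWeightedHomogeneous (wdeg p) (PowerSeries.coeff j (logEpVec p)) j := by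
  rw [logEpVec, PowerSeries.coeff_mk]
  apply IsWeightedHomogeneous.sum
  intro l _
  split_ifs with hl
  · have := logEpCoeff_hom p hp l (j / p ^ l)
    rwa [Nat.mul_div_cancel' hl] at this
  · exact isWeightedHomogeneous_zero ℚ _ _

private lemma logEpVec_pow_hom (p : ℕ) (hp : 1 ≤ p) (t n : ℕ) :
    IsWeightedHomogeneous (wdeg p) (PowerSeries.coeff n (logEpVec p ^ t)) n := by
  induction t generalizing n with
  | zero =>
      rw [pow_zero, PowerSeries.coeff_one]
      split_ifs with h
      · subst h; exact isWeightedHomogeneous_one ℚ _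
      · exact isWeightedHomogeneous_zero ℚ _ _
  | succ t ih =>
      rw [pow_succ, PowerSeries.coeff_mul]
      apply IsWeightedHomogeneous.sum
      intro x hx
      have := (ih x.1).mul (logEpVec_hom p hp x.2)
      rwa [Finset.HasAntidiagonal.mem_antidiagonal.1 hx] at this

private lemma EpVecCoeff_hom (p : ℕ) (hp : 1 ≤ p) (n : ℕ) :
    IsWeightedHomogeneous (wdeg p) (EpVecCoeff p n) n := by
  apply IsWeightedHomogeneous.sum
  intro t _
  exact wh_smul _ (logEpVec_pow_hom p hp t n)

end Stmt12Aux

/-- The truncation ideal generated by `Λ^L`, `U_i^N` for `i < M` and `U_i` for `i ≥ M`. -/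
noncomputable def truncIdeal (p : ℕ) (hp : p.Prime) (L M N : ℕ) :
    Ideal (MvPolynomial (Option ℕ) (Zploc p hp)) :=
  Ideal.span ({MvPolynomial.X none ^ L} ∪
    ((fun i => MvPolynomial.X (some i) ^ N) '' {i : ℕ | i < M}) ∪
    ((fun i => MvPolynomial.X (some i)) '' {i : ℕ | M ≤ i}))

theorem stmt12 (p : ℕ) (hp : p.Prime) (L M N : ℕ) (hL : 1 ≤ L) (hM : 1 ≤ M)
    (hN : 1 ≤ N) :
    ∀ n : ℕ, (N - 1) * (∑ i ∈ Finset.range M, p ^ i) + (L - 1) < n →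
      PowerSeries.coeff n
        (EpZ p hp
          (fun i => Ideal.Quotient.mk (truncIdeal p hp L M N) (MvPolynomial.X (some i)))
          (Ideal.Quotient.mk (truncIdeal p hp L M N) (MvPolynomial.X none))) = 0 := by
  intro n hn
  classical
  rw [EpZ, PowerSeries.coeff_mk, specPoly]
  apply Finset.sum_eq_zero
  intro m hm
  set Q := Ideal.Quotient.mk (truncIdeal p hp L M N) with hQ
  set v : Option ℕ → MvPolynomial (Option ℕ) (Zploc p hp) ⧸ truncIdeal p hp L M N :=
    fun o => o.elim (Q (MvPolynomial.X none)) (fun i => Q (MvPolynomial.X (some i))) with hv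
  have hw : Finsupp.weight (wdeg p) m = n :=
    EpVecCoeff_hom p hp.pos n (MvPolynomial.mem_support_iff.1 hm)
  suffices h : (m.prod fun i k => v i ^ k) = 0 by
    exact mul_eq_zero_of_right _ h
  -- a helper that kills the product once a single factor is zero
  have kill : ∀ i₀ : Option ℕ, m i₀ ≠ 0 → v i₀ ^ m i₀ = 0 →
      (m.prod fun i k => v i ^ k) = 0 := by
    intro i₀ h0 hz
    rw [Finsupp.prod]
    exact Finset.prod_eq_zero (f := fun a => v a ^ m a) (Finsupp.mem_support_iff.2 h0) hz
  have mkX : ∀ g : MvPolynomial (Option ℕ) (Zploc p hp), g ∈ truncIdeal p hp L M N → Q g = 0 :=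
    fun g hg => (Ideal.Quotient.eq_zero_iff_mem).2 hg
  by_cases hA : L ≤ m none
  · apply kill none (by omega)
    have : v none ^ m none = Q (MvPolynomial.X none ^ m none) := by
      simp [hv, map_pow]
    rw [this]
    apply mkX
    rw [show m none = L + (m none - L) by omega, pow_add]
    exact Ideal.mul_mem_right _ _ (Ideal.subset_span
      (Set.mem_union_left _ (Set.mem_union_left _ rfl)))
  by_cases hB : ∃ i, i < M ∧ N ≤ m (some i)
  · obtain ⟨i, hiM, hiN⟩ := hB
    apply kill (some i) (by omega)
    have : v (some i) ^ m (some i) = Q (MvPolynomial.X (some i) ^ m (some i)) := by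
      simp [hv, map_pow]
    rw [this]
    apply mkX
    rw [show m (some i) = N + (m (some i) - N) by omega, pow_add]
    exact Ideal.mul_mem_right _ _ (Ideal.subset_span
      (Set.mem_union_left _ (Set.mem_union_right _ ⟨i, hiM, rfl⟩)))
  by_cases hC : ∃ i, M ≤ i ∧ m (some i) ≠ 0
  · obtain ⟨i, hiM, hi0⟩ := hC
    apply kill (some i) hi0
    have : v (some i) ^ m (some i) = Q (MvPolynomial.X (some i) ^ m (some i)) := by
      simp [hv, map_pow]
    rw [this]
    apply mkX
    rw [show m (some i) = 1 + (m (some i) - 1) by omega, pow_add, pow_one]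
    exact Ideal.mul_mem_right _ _ (Ideal.subset_span
      (Set.mem_union_right _ ⟨i, hiM, rfl⟩))
  -- otherwise the weight of `m` is at most the bound, contradiction
  exfalso
  push_neg at hA hB hC
  have hsub : m.support ⊆ insert none ((Finset.range M).image some) := by
    intro i hi
    rcases i with _ | i
    · exact Finset.mem_insert_self _ _
    · apply Finset.mem_insert_of_mem
      rw [Finset.mem_image]
      refine ⟨i, Finset.mem_range.2 ?_, rfl⟩
      by_contra h
      exact (Finsupp.mem_support_iff.1 hi) (hC i (le_of_not_gt h))
  have hbound : Finsupp.weight (wdeg p) m ≤ (L - 1) + (N - 1) * ∑ i ∈ Finset.range M, p ^ i := by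
    rw [Finsupp.weight_apply, Finsupp.sum]
    calc ∑ i ∈ m.support, m i • wdeg p i
        ≤ ∑ i ∈ insert none ((Finset.range M).image some), m i • wdeg p i :=
          Finset.sum_le_sum_of_subset hsub
      _ = m none * 1 + ∑ i ∈ Finset.range M, m (some i) * p ^ i := by
          rw [Finset.sum_insert (by simp), Finset.sum_image (by simp)]
          simp [smul_eq_mul]
      _ ≤ (L - 1) * 1 + ∑ i ∈ Finset.range M, (N - 1) * p ^ i := by
          gcongr with i hi
          · omega
          · have := hB i (Finset.mem_range.1 hi)
            omega
      _ = (L - 1) + (N - 1) * ∑ i ∈ Finset.range M, p ^ i := by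
          rw [Finset.mul_sum]; ring
  omega
end

section
/- For an odd prime p, the element p ∈ W(Z) (the image of p under the unique ring map Z → W(Z), equivalently p times the multiplicative unit of the Witt ring) has coordinates p = (p, 1 − p^{p−1}, a_2, a_3, ...) where for each n ≥ 2 the coordinate a_n is p^{p−1} times a principal p-adic unit (i.e. v_p(a_n) = p−1 when viewed in Z_p). For p = 2, one has 2 = (2, −1, a_2, a_3, ...) in W(Z) with v_2(a_n) = 2^{n−2} + 1 for n ≥ 2. -/
/-!
STATEMENT 14: the element `p ∈ W(ℤ)` has coordinates
`p = (p, 1 − p^{p−1}, a_2, a_3, …)` where, for an odd prime `p`, each `a_n`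
(`n ≥ 2`) is `p^{p−1}` times a principal `p`-adic unit (a unit `ε ∈ ℤ_p` with
`ε ≡ 1 mod p`); for `p = 2`, `2 = (2, −1, a_2, …)` with `v_2(a_n) = 2^{n−2}+1`
for `n ≥ 2`, i.e. `a_n = ε·2^{2^{n−2}+1}` with `ε` a `2`-adic unit.
-/

-- binomial: for odd prime p, p ∣ x → p*x^2 ∣ (1+x)^p - (1+p*x)
lemma binom_aux (p : ℕ) (hp : p.Prime) (hodd : p ≠ 2) (x : ℤ) (hx : (p:ℤ) ∣ x) :
    (p:ℤ) * x^2 ∣ (1+x)^p - (1 + p*x) := by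
  have hp3 : 3 ≤ p := by
    have := hp.two_le
    omega
  have hbin : (x + 1)^p = ∑ k ∈ Finset.range (p+1), x^k * 1^(p-k) * (p.choose k) :=
    add_pow x 1 p
  simp only [one_pow, mul_one] at hbin
  have hsplit : ∑ k ∈ Finset.range (p+1), x^k * (p.choose k : ℤ)
      = (∑ k ∈ Finset.range 2, x^k * (p.choose k : ℤ))
        + ∑ k ∈ Finset.Ico 2 (p+1), x^k * (p.choose k : ℤ) := by
    rw [Finset.range_eq_Ico, ← Finset.sum_Ico_consecutive _ (by omega : 0 ≤ 2) (by omega : 2 ≤ p+1)]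
    rw [Finset.range_eq_Ico]
  have h2 : ∑ k ∈ Finset.range 2, x^k * (p.choose k : ℤ) = 1 + p * x := by
    simp [Finset.sum_range_succ, mul_comm]
  have key : (1+x)^p - (1 + p*x) = ∑ k ∈ Finset.Ico 2 (p+1), x^k * (p.choose k : ℤ) := by
    rw [add_comm (1:ℤ) x, hbin, hsplit, h2]; ring
  rw [key]
  apply Finset.dvd_sum
  intro k hk
  simp only [Finset.mem_Ico] at hk
  rcases eq_or_lt_of_le (Nat.lt_succ_iff.mp hk.2) with hkp | hkp
  · -- k = p
    subst hkp
    rw [Nat.choose_self]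
    push_cast
    rw [mul_one]
    have hxk : x ^ k = (x^2 * x^(k-3)) * x := by
      rw [← pow_add, ← pow_succ]
      congr 1
      omega
    rw [hxk]
    rcases hx with ⟨c, hc⟩
    exact ⟨x^(k-3) * c, by rw [hc]; ring⟩
  · -- 2 ≤ k < p
    have hdvd : (p:ℤ) ∣ (p.choose k : ℤ) := Int.natCast_dvd_natCast.mpr (hp.dvd_choose_self (by omega) hkp)
    have hx2 : x^2 ∣ x^k := pow_dvd_pow x hk.1
    calc (p:ℤ) * x^2 ∣ x^2 * (p.choose k : ℤ) := by
          rcases hdvd with ⟨c, hc⟩; exact ⟨c, by rw [hc]; ring⟩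
      _ ∣ x^k * (p.choose k : ℤ) := mul_dvd_mul_right hx2 _

lemma pow_one_sub (p : ℕ) (hp : p.Prime) (hodd : p ≠ 2) (j : ℕ) :
    ∃ t : ℤ, (1-(p:ℤ)^(p-1))^(p^j) = 1 - (p:ℤ)^(j+p-1) + (p:ℤ)^(j+p) * t := by
  have hp3 : 3 ≤ p := by have := hp.two_le; omega
  induction j with
  | zero =>
    refine ⟨0, ?_⟩
    simp only [pow_zero, pow_one, mul_zero, add_zero, zero_add]
  | succ j ih =>
    obtain ⟨t, ht⟩ := ih
    set P : ℤ := (p : ℤ) with hP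
    set x : ℤ := P^(j+p) * t - P^(j+p-1) with hx
    have hxd : P ∣ x := by
      have e1 : P^(j+p) = P^(j+p-1) * P := by rw [← pow_succ]; congr 1; omega
      have e2 : P^(j+p-1) = P^(j+p-2) * P := by rw [← pow_succ]; congr 1; omega
      exact ⟨P^(j+p-1)*t - P^(j+p-2), by rw [hx, e1, e2]; ring⟩
    obtain ⟨s, hs⟩ := binom_aux p hp hodd x hxd
    refine ⟨t + P^(j+p-2) * (P*t-1)^2 * s, ?_⟩
    have hyx : (1 - P^(p-1))^(p^(j+1)) = (1+x)^p := by
      rw [pow_succ, pow_mul, ht]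
      congr 1
      rw [hx]; ring
    have hxp : (1+x)^p = 1 + P*x + P*x^2*s := by linarith [hs]
    rw [hyx, hxp, hx]
    have e1 : P^(j+p) = P^(j+p-2) * P^2 := by rw [← pow_add]; congr 1; omega
    have e2 : P^(j+p-1) = P^(j+p-2) * P := by rw [← pow_succ]; congr 1; omega
    have e3 : P^(j+1+p-1) = P^(j+p-2) * P^2 := by rw [← pow_add]; congr 1; omega
    have e4 : P^(j+1+p) = P^(j+p-2) * P^3 := by rw [← pow_add]; congr 1; omega
    rw [e1, e2, e3, e4]
    ring

lemma ineq1 (p n : ℕ) (hp : 2 ≤ p) (hn : 2 ≤ n) : n + p ≤ p^n := by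
  induction n with
  | zero => omega
  | succ n ih =>
    rcases Nat.lt_or_ge n 2 with h | h
    · interval_cases n
      · omega
      · have : 2*2 ≤ p*p := Nat.mul_le_mul hp hp
        simpa [pow_succ, pow_one] using by nlinarith
    · have h1 := ih h
      have h2 : 1 ≤ p^n := Nat.one_le_pow _ _ (by omega)
      calc n + 1 + p ≤ p^n + p^n := by omega
        _ ≤ p^n * p := by nlinarith
        _ = p^(n+1) := (pow_succ p n).symm

lemma ineq2 (p m : ℕ) (hp : 3 ≤ p) (hm : 1 ≤ m) : m + p ≤ (p-1) * p^m := by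
  have h1 : m < p^m := Nat.lt_pow_self (by omega)
  have h2 : p ≤ p^m := Nat.le_self_pow (by omega) p
  have h3 : 2 * p^m ≤ (p-1) * p^m := Nat.mul_le_mul_right _ (by omega)
  omega

lemma ghost_eq (p : ℕ) [hp : Fact p.Prime] (n : ℕ) :
    ∑ i ∈ Finset.range (n+1), (p:ℤ)^i * ((p : WittVector p ℤ).coeff i)^(p^(n-i)) = p := by
  have h := map_natCast (WittVector.ghostComponent (p := p) (R := ℤ) n) p
  rwa [WittVector.ghostComponent_apply, aeval_wittPolynomial] at h

lemma coeff0 (p : ℕ) [hp : Fact p.Prime] : (p : WittVector p ℤ).coeff 0 = (p : ℤ) := by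
  have h := ghost_eq p 0
  simpa using h

lemma coeff1 (p : ℕ) [hp : Fact p.Prime] :
    (p : WittVector p ℤ).coeff 1 = 1 - (p : ℤ) ^ (p - 1) := by
  have h := ghost_eq p 1
  rw [Finset.sum_range_succ, Finset.sum_range_one] at h
  simp only [pow_zero, one_mul, pow_one, coeff0, Nat.sub_self] at h
  have hp1 : 1 ≤ p := hp.out.one_lt.le
  have hpe : (p:ℤ)^(p^1) = (p:ℤ) * (p:ℤ)^(p-1) := by
    rw [pow_one, ← pow_succ']
    congr 1
    omega
  have hne : (p:ℤ) ≠ 0 := by exact_mod_cast hp.out.ne_zero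
  have : (p:ℤ) * ((p : WittVector p ℤ).coeff 1) = (p:ℤ) * (1 - (p:ℤ)^(p-1)) := by
    rw [hpe] at h; ring_nf; ring_nf at h; linarith
  exact mul_left_cancel₀ hne this

lemma key_odd (p : ℕ) [hp : Fact p.Prime] (hodd : p ≠ 2) :
    ∀ n, 2 ≤ n → (p:ℤ)^p ∣ (p : WittVector p ℤ).coeff n - (p:ℤ)^(p-1) := by
  have hp3 : 3 ≤ p := by have := hp.out.two_le; omega
  intro n
  induction n using Nat.strong_induction_on with
  | _ n IH =>
  intro hn
  set P : ℤ := (p:ℤ) with hPdef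
  set c : ℕ → ℤ := fun i => (p : WittVector p ℤ).coeff i with hcdef
  have hg := ghost_eq p n
  rw [Finset.sum_range_succ] at hg
  rw [Finset.range_eq_Ico, ← Finset.sum_Ico_consecutive _ (Nat.zero_le 2) hn] at hg
  rw [← Finset.range_eq_Ico, Finset.sum_range_succ, Finset.sum_range_one] at hg
  simp only [Nat.sub_self, pow_zero, pow_one, one_mul, Nat.sub_zero] at hg
  rw [coeff0, coeff1] at hg
  -- hg : P^(p^n) + P * (1-P^(p-1))^(p^(n-1)) + (∑ i in Ico 2 n, P^i * c i ^ p^(n-i)) + P^n * c n = P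
  obtain ⟨t, ht⟩ := pow_one_sub p hp.out hodd (n-1)
  have hSdvd : (P^(n+p)) ∣ ∑ i ∈ Finset.Ico 2 n, P^i * ((p : WittVector p ℤ).coeff i) ^ p^(n-i) := by
    apply Finset.dvd_sum
    intro i hi
    simp only [Finset.mem_Ico] at hi
    obtain ⟨k, hk⟩ := IH i hi.2 hi.1
    have hci : (P^(p-1)) ∣ ((p : WittVector p ℤ).coeff i) := ⟨1 + P*k, by
      have : (p : WittVector p ℤ).coeff i = P^(p-1) + P^p * k := by linarith [hk]
      rw [this]
      have : (P:ℤ)^p = P^(p-1) * P := by rw [← pow_succ]; congr 1; omega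
      rw [this]; ring⟩
    have h1 : (P^((p-1) * p^(n-i))) ∣ ((p : WittVector p ℤ).coeff i) ^ p^(n-i) := by
      rw [pow_mul]
      exact pow_dvd_pow_of_dvd hci _
    have h2 : P^(n+p) ∣ P^i * P^((p-1) * p^(n-i)) := by
      rw [← pow_add]
      apply pow_dvd_pow
      have := ineq2 p (n-i) hp3 (by omega)
      omega
    exact dvd_trans h2 (mul_dvd_mul_left _ h1)
  have hp_pow : P^(n+p) ∣ P^(p^n) := by
    apply pow_dvd_pow
    exact ineq1 p n (by omega) hn
  have hc1 : P * (1-P^(p-1))^(p^(n-1)) = P - P^(n+p-1) + P^(n+p) * t := by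
    have e1 : P * P^(n-1+p-1) = P^(n+p-1) := by rw [← pow_succ']; congr 1; omega
    have e2 : P * P^(n-1+p) = P^(n+p) := by rw [← pow_succ']; congr 1; omega
    calc P * (1-P^(p-1))^(p^(n-1)) = P * (1 - P^(n-1+p-1) + P^(n-1+p) * t) := by rw [ht]
      _ = P - P*P^(n-1+p-1) + P*P^(n-1+p)*t := by ring
      _ = P - P^(n+p-1) + P^(n+p)*t := by rw [e1, e2]
  rw [hc1] at hg
  have hPne : P ≠ 0 := by
    rw [hPdef]
    exact_mod_cast hp.out.ne_zero
  have e3 : P^n * P^(p-1) = P^(n+p-1) := by rw [← pow_add]; congr 1; omega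
  have hfin : P^n * ((p : WittVector p ℤ).coeff n) - P^n * P^(p-1)
      = -(P^(p^n)) - (∑ i ∈ Finset.Ico 2 n, P^i * ((p : WittVector p ℤ).coeff i) ^ p^(n-i)) - P^(n+p)*t := by
    rw [e3]
    linarith [hg]
  have hdvd : P^(n+p) ∣ P^n * (((p : WittVector p ℤ).coeff n) - P^(p-1)) := by
    rw [mul_sub, hfin]
    exact dvd_sub (dvd_sub (dvd_neg.mpr hp_pow) hSdvd) (dvd_mul_right _ t)
  have e4 : P^(n+p) = P^n * P^p := by rw [← pow_add]
  rw [e4] at hdvd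
  exact (mul_dvd_mul_iff_left (pow_ne_zero n hPne)).mp hdvd

lemma ineq3 (m : ℕ) (hm : 2 ≤ m) : m + 2 ≤ 2^m := by
  induction m with
  | zero => omega
  | succ m ih =>
    rcases Nat.lt_or_ge m 2 with h | h
    · interval_cases m <;> omega
    · have := ih h
      have h2 : (2:ℕ)^(m+1) = 2 * 2^m := by rw [pow_succ]; ring
      omega

lemma ineq4 (n : ℕ) (hn : 3 ≤ n) : n + 2^(n-2) + 2 ≤ 2^n := by
  have h1 : n - 2 < 2^(n-2) := Nat.lt_two_pow_self
  have h2 : (2:ℕ)^n = 4 * 2^(n-2) := by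
    have h3 : (2:ℕ)^2 * 2^(n-2) = 2^n := by rw [← pow_add]; congr 1; omega
    norm_num at h3
    omega
  set A := (2:ℕ)^(n-2)
  omega

lemma key_two : ∀ n, 2 ≤ n → ∃ u : ℤ,
    Odd u ∧ ((2:ℕ) : WittVector 2 ℤ).coeff n = u * 2^(2^(n-2)+1) := by
  have hc0 : ((2:ℕ) : WittVector 2 ℤ).coeff 0 = 2 := by simpa using coeff0 2
  have hc1 : ((2:ℕ) : WittVector 2 ℤ).coeff 1 = -1 := by
    rw [coeff1 2]; norm_num
  intro n
  induction n using Nat.strong_induction_on with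
  | _ n IH =>
  intro hn
  rcases eq_or_lt_of_le hn with hn2 | hn3
  · -- n = 2
    refine ⟨-1, ⟨-1, by ring⟩, ?_⟩
    have hg := ghost_eq 2 2
    rw [Finset.sum_range_succ, Finset.sum_range_succ, Finset.sum_range_one] at hg
    simp only [Nat.sub_self, pow_zero, pow_one, one_mul, Nat.sub_zero] at hg
    rw [hc0, hc1] at hg
    rw [← hn2]
    show ((2:ℕ) : WittVector 2 ℤ).coeff 2 = -1 * 2^(2^0+1)
    norm_num at hg ⊢
    linarith
  · -- n ≥ 3
    obtain ⟨m, rfl⟩ : ∃ m, n = m + 1 := ⟨n-1, by omega⟩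
    have hm2 : 2 ≤ m := by omega
    have hg := ghost_eq 2 (m+1)
    rw [Finset.sum_range_succ] at hg
    rw [Finset.range_eq_Ico, ← Finset.sum_Ico_consecutive _ (Nat.zero_le 2) (by omega : 2 ≤ m+1)] at hg
    rw [Finset.sum_Ico_succ_top hm2] at hg
    rw [← Finset.range_eq_Ico, Finset.sum_range_succ, Finset.sum_range_one] at hg
    simp only [Nat.sub_self, pow_zero, pow_one, one_mul, Nat.sub_zero,
      Nat.add_sub_cancel_left, Nat.add_sub_cancel] at hg
    rw [hc0, hc1] at hg
    have hneg1 : (-1 : ℤ)^(2^m) = 1 := Even.neg_one_pow ⟨2^(m-1), by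
      rw [← two_mul, ← pow_succ']
      congr 1
      omega⟩
    rw [hneg1] at hg
    -- hg : 2^(2^(m+1)) + 2*1 + (∑ + 2^m * coeff m ^ 2) + 2^(m+1)*coeff (m+1) = 2
    obtain ⟨u, hu, hcm⟩ := IH m (by omega) hm2
    have hcm2 : ((2:ℕ) : WittVector 2 ℤ).coeff m ^ 2 = u^2 * 2^(2^(m-1)+2) := by
      rw [hcm, mul_pow, ← pow_mul]
      congr 2
      have h3 : (2:ℕ)^(m-2) * 2 = 2^(m-1) := by rw [← pow_succ]; congr 1; omega
      omega
    have hDdvd : ((2:ℤ)^(m + 2^(m-1) + 3)) ∣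
        ((2:ℤ))^(2^(m+1)) + ∑ x ∈ Finset.Ico 2 m,
          (2:ℤ)^x * ((2:ℕ) : WittVector 2 ℤ).coeff x ^ 2^(m+1-x) := by
      apply dvd_add
      · apply pow_dvd_pow
        have h6 := ineq4 (m+1) (by omega)
        rw [show m+1-2 = m-1 by omega] at h6
        omega
      · apply Finset.dvd_sum
        intro i hi
        simp only [Finset.mem_Ico] at hi
        obtain ⟨v, hv, hcv⟩ := IH i (by omega) hi.1
        have hsplit2 : (2:ℕ)^(i-2) * 2^(m+1-i) = 2^(m-1) := by
          rw [← pow_add]; congr 1; omega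
        have hexp : m + 2^(m-1) + 3 ≤ i + (2^(i-2)+1) * 2^(m+1-i) := by
          have h4 := ineq3 (m+1-i) (by omega)
          have h5 : (2^(i-2)+1) * 2^(m+1-i) = 2^(m-1) + 2^(m+1-i) := by
            rw [add_mul, one_mul, hsplit2]
          rw [h5]
          set a := (2:ℕ)^(m-1)
          set b := (2:ℕ)^(m+1-i)
          omega
        have heq : (2:ℤ)^i * ((2:ℕ) : WittVector 2 ℤ).coeff i ^ 2^(m+1-i)
            = v^(2^(m+1-i)) * 2^(i + (2^(i-2)+1) * 2^(m+1-i)) := by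
          rw [hcv, mul_pow, ← pow_mul, pow_add]
          ring
        rw [heq]
        exact Dvd.dvd.mul_left (pow_dvd_pow _ hexp) _
    obtain ⟨s, hs⟩ := hDdvd
    refine ⟨-u^2 - 2*s, ?_, ?_⟩
    · rcases hu with ⟨w, hw⟩
      exact ⟨-(2*w^2 + 2*w + s) - 1, by rw [hw]; ring⟩
    · -- cancel 2^(m+1)
      have e1 : (2:ℤ)^(m + 2^(m-1) + 2) = 2^(m+1) * 2^(2^(m-1)+1) := by
        rw [← pow_add]; congr 1; omega
      have e2 : (2:ℤ)^(m + 2^(m-1) + 3) = 2^(m+1) * (2^(2^(m-1)+1) * 2) := by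
        rw [← pow_succ, ← pow_add]
        congr 1
        omega
      have e3 : (2:ℤ)^m * ((2:ℕ) : WittVector 2 ℤ).coeff m ^ 2
          = 2^(m + 2^(m-1) + 2) * u^2 := by
        rw [hcm2, show (2:ℤ)^(m + 2^(m-1) + 2) = 2^m * 2^(2^(m-1)+2) by
          rw [← pow_add]; congr 1 <;> omega]
        ring
      have hmain : (2:ℤ)^(m+1) * ((2:ℕ) : WittVector 2 ℤ).coeff (m+1)
          = 2^(m+1) * ((-u^2 - 2*s) * 2^(2^(m-1)+1)) := by
        have hcast : ((2:ℕ):ℤ) = 2 := by norm_num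
        rw [hcast] at hg
        calc (2:ℤ)^(m+1) * ((2:ℕ) : WittVector 2 ℤ).coeff (m+1)
            = 2 - 2^(2^(m+1)) - 2*1
              - (∑ x ∈ Finset.Ico 2 m,
                  (2:ℤ)^x * ((2:ℕ) : WittVector 2 ℤ).coeff x ^ 2^(m+1-x))
              - 2^m * ((2:ℕ) : WittVector 2 ℤ).coeff m ^ 2 := by linarith [hg]
          _ = -(2^(2^(m+1)) + ∑ x ∈ Finset.Ico 2 m,
                  (2:ℤ)^x * ((2:ℕ) : WittVector 2 ℤ).coeff x ^ 2^(m+1-x))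
              - 2^(m + 2^(m-1) + 2) * u^2 := by rw [e3]; ring
          _ = -(2^(m + 2^(m-1) + 3) * s) - 2^(m + 2^(m-1) + 2) * u^2 := by rw [hs]
          _ = 2^(m+1) * ((-u^2 - 2*s) * 2^(2^(m-1)+1)) := by rw [e1, e2]; ring
      have h2ne : ((2:ℤ)^(m+1)) ≠ 0 := pow_ne_zero _ two_ne_zero
      exact mul_left_cancel₀ h2ne hmain

lemma unit_of_not_dvd (p : ℕ) [hp : Fact p.Prime] (k : ℤ) (h : ¬ (p:ℤ) ∣ k) :
    IsUnit (k : ℤ_[p]) := by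
  rw [PadicInt.isUnit_iff]
  refine le_antisymm (PadicInt.norm_le_one _) ?_
  by_contra hlt
  push_neg at hlt
  exact h ((PadicInt.norm_int_lt_one_iff_dvd k).mp hlt)

theorem stmt14 (p : ℕ) [hp : Fact p.Prime] :
    ((p : WittVector p ℤ).coeff 0 = (p : ℤ)) ∧
    ((p : WittVector p ℤ).coeff 1 = 1 - (p : ℤ) ^ (p - 1)) ∧
    (p ≠ 2 → ∀ n, 2 ≤ n → ∃ ε : ℤ_[p],
      IsUnit ε ∧ ((p : ℤ_[p]) ∣ (ε - 1)) ∧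
      (((p : WittVector p ℤ).coeff n : ℤ_[p]) = ε * (p : ℤ_[p]) ^ (p - 1))) ∧
    (p = 2 → ∀ n, 2 ≤ n → ∃ ε : ℤ_[p],
      IsUnit ε ∧
      (((p : WittVector p ℤ).coeff n : ℤ_[p]) = ε * (p : ℤ_[p]) ^ (2 ^ (n - 2) + 1))) := by
  refine ⟨coeff0 p, coeff1 p, ?_, ?_⟩
  · intro hodd n hn
    obtain ⟨k, hk⟩ := key_odd p hodd n hn
    refine ⟨((1 + p*k : ℤ) : ℤ_[p]), ?_, ?_, ?_⟩
    · apply unit_of_not_dvd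
      intro hd
      have : (p:ℤ) ∣ 1 := (dvd_add_right ⟨k, rfl⟩).mp (by rwa [add_comm] at hd)
      have := Int.le_of_dvd one_pos this
      have h2 := hp.out.two_le
      omega
    · refine ⟨(k : ℤ_[p]), ?_⟩
      push_cast
      ring
    · have hc : ((p : WittVector p ℤ).coeff n) = (1 + p*k) * (p:ℤ)^(p-1) := by
        have e1 : (p:ℤ)^p = (p:ℤ)^(p-1) * p := by
          rw [← pow_succ]
          congr 1
          have := hp.out.two_le
          omega
        have : (p : WittVector p ℤ).coeff n = (p:ℤ)^(p-1) + (p:ℤ)^p * k := by linarith [hk]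
        rw [this, e1]
        ring
      rw [hc]
      push_cast
      ring
  · intro h2 n hn
    subst h2
    obtain ⟨u, hu, hcu⟩ := key_two n hn
    refine ⟨(u : ℤ_[2]), ?_, ?_⟩
    · apply unit_of_not_dvd
      rw [Int.odd_iff] at hu
      omega
    · rw [hcu]
      push_cast
      ring
end

section
/- Let O = Z[C, Λ]/(p − C·Λ^{p−1}) and let c, λ be the images of C, Λ. Then there exists a unique Witt vector d = (d_0, d_1, d_2, ...) ∈ W(O) with d_0 = c and d_1 = 1 − p^{p−1}, such that p·[λ] = (λ^p d_0, λ^p d_1, λ^p d_2, ...) in W(O), i.e. every coordinate of the Witt vector p·[λ] is divisible by λ^p and d is the vector of quotients. -/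
/-!
STATEMENT 15: let `O = ℤ[C,Λ]/(p − C·Λ^{p−1})` with `c, λ` the images of `C, Λ`.
There is a unique Witt vector `d ∈ W(O)` with `d_0 = c`, `d_1 = 1 − p^{p−1}`, such
that `p·[λ] = (λ^p d_0, λ^p d_1, λ^p d_2, …)` in `W(O)`.
-/

open MvPolynomial

/-- The ring `O = ℤ[C,Λ]/(p − C·Λ^{p−1})`, with `C = X 0` and `Λ = X 1`. -/
noncomputable abbrev ORing (p : ℕ) : Type :=
  MvPolynomial (Fin 2) ℤ ⧸
    Ideal.span {(p : MvPolynomial (Fin 2) ℤ) - X 0 * X 1 ^ (p - 1)}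

/-- The image `c` of `C` in `O`. -/
noncomputable abbrev cO (p : ℕ) : ORing p := Ideal.Quotient.mk _ (X 0)

/-- The image `λ` of `Λ` in `O`. -/
noncomputable abbrev lamO (p : ℕ) : ORing p := Ideal.Quotient.mk _ (X 1)

section Aux

variable {p : ℕ} [hp : Fact p.Prime]

open Finset in
lemma aux_ghost_mk {R : Type*} [CommRing R] (f : ℕ → R) (n : ℕ) :
    WittVector.ghostComponent n (WittVector.mk p f) =
      ∑ i ∈ range (n + 1), (p : R) ^ i * f i ^ p ^ (n - i) := by
  rw [WittVector.ghostComponent_apply, aeval_wittPolynomial, WittVector.coeff_mk]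

open Finset in
lemma aux_mul_teich_rat {σ : Type*} (x : WittVector p (MvPolynomial σ ℚ))
    (r : MvPolynomial σ ℚ) :
    x * WittVector.teichmuller p r =
      WittVector.mk p (fun n => x.coeff n * r ^ p ^ n) := by
  apply (WittVector.ghostMap.bijective_of_invertible p (MvPolynomial σ ℚ)).injective
  funext n
  rw [WittVector.ghostMap_apply, WittVector.ghostMap_apply, aux_ghost_mk, map_mul,
    WittVector.ghostComponent_teichmuller, WittVector.ghostComponent_apply,
    aeval_wittPolynomial, Finset.sum_mul]
  refine Finset.sum_congr rfl fun i hi => ?_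
  have hin : i ≤ n := Nat.lt_succ_iff.mp (Finset.mem_range.mp hi)
  rw [mul_pow, ← pow_mul, ← pow_add, Nat.add_sub_cancel' hin]
  ring

lemma aux_mul_teich_int {σ : Type*} (x : WittVector p (MvPolynomial σ ℤ))
    (r : MvPolynomial σ ℤ) :
    x * WittVector.teichmuller p r =
      WittVector.mk p (fun n => x.coeff n * r ^ p ^ n) := by
  apply WittVector.map_injective (MvPolynomial.map (Int.castRingHom ℚ))
    (MvPolynomial.map_injective (Int.castRingHom ℚ) Int.cast_injective)
  rw [map_mul, WittVector.map_teichmuller, aux_mul_teich_rat]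
  refine WittVector.ext fun n => ?_
  rw [WittVector.map_coeff, WittVector.coeff_mk, WittVector.coeff_mk, map_mul, map_pow,
    WittVector.map_coeff]

/-- Key universal identity: multiplying by a Teichmüller lift multiplies the
`n`-th coefficient by `r ^ p ^ n`. -/
lemma aux_mul_teich {R : Type*} [CommRing R] (x : WittVector p R) (r : R) :
    x * WittVector.teichmuller p r =
      WittVector.mk p (fun n => x.coeff n * r ^ p ^ n) := by
  classical
  let f : MvPolynomial (Option ℕ) ℤ →+* R :=
    (MvPolynomial.aeval (fun o : Option ℕ => o.elim r x.coeff)).toRingHom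
  let xt : WittVector p (MvPolynomial (Option ℕ) ℤ) :=
    WittVector.mk p (fun n => X (Option.some n))
  have hxt' : ∀ n, f (X (Option.some n)) = x.coeff n := by
    intro n; simp [f]
  have hr : f (X (none : Option ℕ)) = r := by simp [f]
  have hx : WittVector.map f xt = x :=
    WittVector.ext fun n => by
      simp only [WittVector.map_coeff, xt, WittVector.coeff_mk, hxt']
  calc x * WittVector.teichmuller p r
      = WittVector.map f xt *
          WittVector.teichmuller p (f (X (none : Option ℕ))) := by rw [hx, hr]
    _ = WittVector.map f (xt * WittVector.teichmuller p (X (none : Option ℕ))) := by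
        rw [map_mul, WittVector.map_teichmuller]
    _ = WittVector.mk p (fun n => x.coeff n * r ^ p ^ n) := by
        rw [aux_mul_teich_int]
        refine WittVector.ext fun n => ?_
        simp only [WittVector.map_coeff, xt, WittVector.coeff_mk, map_mul, map_pow,
          hxt', hr]

lemma aux_mul_teich_coeff {R : Type*} [CommRing R] (x : WittVector p R) (r : R) (n : ℕ) :
    (x * WittVector.teichmuller p r).coeff n = x.coeff n * r ^ p ^ n := by
  rw [aux_mul_teich, WittVector.coeff_mk]

lemma aux_p_coeff_zero {R : Type*} [CommRing R] :
    ((p : ℕ) : WittVector p R).coeff 0 = (p : R) := by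
  rw [← WittVector.constantCoeff_apply]
  exact map_natCast _ p

lemma aux_p_coeff_one_int : ((p : ℕ) : WittVector p ℤ).coeff 1 = 1 - (p : ℤ) ^ (p - 1) := by
  have hg : WittVector.ghostComponent 1 ((p : ℕ) : WittVector p ℤ) = (p : ℤ) :=
    map_natCast _ p
  rw [WittVector.ghostComponent_apply, aeval_wittPolynomial, Finset.sum_range_succ,
    Finset.sum_range_one] at hg
  rw [aux_p_coeff_zero] at hg
  simp only [pow_zero, pow_one, one_mul, Nat.sub_self, Nat.sub_zero] at hg
  -- hg : p ^ p + p * coeff 1 = p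
  have hexp : p - 1 + 1 = p := Nat.sub_add_cancel hp.out.pos
  have hp1 : (p : ℤ) ^ p = (p : ℤ) ^ (p - 1) * p := by rw [← pow_succ, hexp]
  have hpne : (p : ℤ) ≠ 0 := Int.natCast_ne_zero.mpr hp.out.ne_zero
  apply mul_left_cancel₀ hpne
  rw [mul_sub, mul_one]
  linarith [hg, hp1]

lemma aux_p_coeff_one {R : Type*} [CommRing R] :
    ((p : ℕ) : WittVector p R).coeff 1 = 1 - (p : R) ^ (p - 1) := by
  have h : ((p : ℕ) : WittVector p R) =
      WittVector.map (Int.castRingHom R) ((p : ℕ) : WittVector p ℤ) := by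
    rw [map_natCast]
  rw [h, WittVector.map_coeff, aux_p_coeff_one_int]
  simp

/-- Setting `X 1` to zero. -/
noncomputable def sig : MvPolynomial (Fin 2) ℤ →+* MvPolynomial (Fin 2) ℤ :=
  (MvPolynomial.aeval ![X 0, 0]).toRingHom

lemma sig_X0 : sig (X 0) = X 0 := by simp [sig]

lemma sig_X1 : sig (X 1) = 0 := by simp [sig]

lemma X1_dvd_sub_sig (f : MvPolynomial (Fin 2) ℤ) : X 1 ∣ f - sig f := by
  induction f using MvPolynomial.induction_on with
  | C a => simp [sig]
  | add f g hf hg =>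
      have h : f + g - sig (f + g) = (f - sig f) + (g - sig g) := by
        rw [map_add]; ring
      rw [h]; exact dvd_add hf hg
  | mul_X f i hf =>
      fin_cases i
      · show X 1 ∣ f * X 0 - sig (f * X 0)
        have h : f * X 0 - sig (f * X 0) = (f - sig f) * X 0 := by
          rw [map_mul, sig_X0]; ring
        rw [h]; exact Dvd.dvd.mul_right hf _
      · show X 1 ∣ f * X 1 - sig (f * X 1)
        have h : f * X 1 - sig (f * X 1) = f * X 1 := by
          rw [map_mul, sig_X1]; ring
        rw [h]; exact Dvd.intro_left f rfl

lemma aux_lam_cancel (x : ORing p) (hx : lamO p * x = 0) : x = 0 := by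
  obtain ⟨f, rfl⟩ := Ideal.Quotient.mk_surjective x
  set g : MvPolynomial (Fin 2) ℤ := (p : MvPolynomial (Fin 2) ℤ) - X 0 * X 1 ^ (p - 1)
    with hgdef
  have hmem : X 1 * f ∈ Ideal.span {g} := by
    rw [← Ideal.Quotient.eq_zero_iff_mem, map_mul]
    exact hx
  rw [Ideal.mem_span_singleton] at hmem
  obtain ⟨h, hh⟩ := hmem
  -- apply sig to hh
  have hsig : 0 = (p : MvPolynomial (Fin 2) ℤ) * sig h := by
    have h2 := congrArg sig hh
    rw [map_mul, map_mul, sig_X1, zero_mul] at h2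
    have hsg : sig g = (p : MvPolynomial (Fin 2) ℤ) := by
      have h1 : p - 1 ≠ 0 := Nat.sub_ne_zero_of_lt hp.out.one_lt
      simp [sig, hgdef, zero_pow h1]
    rw [hsg] at h2
    exact h2
  have hpne : (p : MvPolynomial (Fin 2) ℤ) ≠ 0 := Nat.cast_ne_zero.mpr hp.out.ne_zero
  have hsh : sig h = 0 := by
    rcases mul_eq_zero.mp hsig.symm with h' | h'
    · exact absurd h' hpne
    · exact h'
  have hdvd : X 1 ∣ h := by
    have h3 := X1_dvd_sub_sig h
    rwa [hsh, sub_zero] at h3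
  obtain ⟨h', rfl⟩ := hdvd
  have h4 : X 1 * f = X 1 * (g * h') := by rw [hh]; ring
  have hfeq : f = g * h' := mul_left_cancel₀ (MvPolynomial.X_ne_zero 1) h4
  rw [Ideal.Quotient.eq_zero_iff_mem, hfeq]
  exact Ideal.mem_span_singleton.mpr ⟨h', rfl⟩

lemma aux_lam_pow_cancel (n : ℕ) (x : ORing p) (hx : lamO p ^ n * x = 0) : x = 0 := by
  induction n with
  | zero => simpa using hx
  | succ k ih =>
      apply ih
      apply aux_lam_cancel (p := p)
      rw [← mul_assoc, mul_comm (lamO p) (lamO p ^ k), ← pow_succ]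
      exact hx

omit hp in
lemma aux_p_eq : (p : ORing p) = cO p * lamO p ^ (p - 1) := by
  have hmem : ((p : MvPolynomial (Fin 2) ℤ) - X 0 * X 1 ^ (p - 1)) ∈
      Ideal.span {(p : MvPolynomial (Fin 2) ℤ) - X 0 * X 1 ^ (p - 1)} :=
    Ideal.subset_span rfl
  have h0 := (Ideal.Quotient.eq_zero_iff_mem).mpr hmem
  rw [map_sub, map_mul, map_pow, map_natCast, sub_eq_zero] at h0
  exact h0

end Aux

theorem stmt15 (p : ℕ) [hp : Fact p.Prime] :
    ∃! d : WittVector p (ORing p),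
      d.coeff 0 = cO p ∧
      d.coeff 1 = 1 - (p : ORing p) ^ (p - 1) ∧
      ∀ n, ((p : WittVector p (ORing p)) *
              WittVector.teichmuller p (lamO p)).coeff n =
            lamO p ^ p * d.coeff n := by
  have hple : ∀ k : ℕ, p ≤ p ^ (k + 1) := fun k =>
    Nat.le_self_pow (Nat.succ_ne_zero k) p
  have hexp : p - 1 + 1 = p := Nat.sub_add_cancel hp.out.pos
  set P : WittVector p (ORing p) := (p : WittVector p (ORing p)) with hP
  have hPnat : P = ((p : ℕ) : WittVector p (ORing p)) := hP
  set dcf : ℕ → ORing p := fun n =>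
    Nat.casesOn n (cO p) (fun k => P.coeff (k + 1) * lamO p ^ (p ^ (k + 1) - p)) with hdcf
  set d : WittVector p (ORing p) := WittVector.mk p dcf with hd
  have hcoef : ∀ n, d.coeff n = dcf n := fun n => by rw [hd, WittVector.coeff_mk]
  have hd0 : d.coeff 0 = cO p := hcoef 0
  have hdn : ∀ k, d.coeff (k + 1) = P.coeff (k + 1) * lamO p ^ (p ^ (k + 1) - p) :=
    fun k => hcoef (k + 1)
  have hd1 : d.coeff 1 = 1 - (p : ORing p) ^ (p - 1) := by
    have h01 := hdn 0
    simp only [zero_add, pow_one, Nat.sub_self, pow_zero, mul_one] at h01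
    rw [h01, hPnat, aux_p_coeff_one]
  have key : ∀ n, (P * WittVector.teichmuller p (lamO p)).coeff n =
      lamO p ^ p * d.coeff n := by
    intro n
    rw [aux_mul_teich_coeff]
    match n with
    | 0 =>
        rw [hd0]
        have hc0 : P.coeff 0 = (p : ORing p) := by rw [hPnat, aux_p_coeff_zero]
        rw [hc0, aux_p_eq, pow_zero, pow_one]
        have hlp : lamO p ^ (p - 1) * lamO p = lamO p ^ p := by
          rw [← pow_succ, hexp]
        calc cO p * lamO p ^ (p - 1) * lamO p
            = cO p * (lamO p ^ (p - 1) * lamO p) := by ring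
          _ = lamO p ^ p * cO p := by rw [hlp]; ring
    | (k + 1) =>
        rw [hdn k]
        have h5 : lamO p ^ p * (P.coeff (k + 1) * lamO p ^ (p ^ (k + 1) - p)) =
            P.coeff (k + 1) * (lamO p ^ p * lamO p ^ (p ^ (k + 1) - p)) := by ring
        have h6 : lamO p ^ p * lamO p ^ (p ^ (k + 1) - p) = lamO p ^ (p ^ (k + 1)) := by
          rw [← pow_add, Nat.add_sub_cancel' (hple k)]
        rw [h5, h6]
  refine ⟨d, ⟨hd0, hd1, key⟩, ?_⟩
  rintro d' ⟨-, -, hkey'⟩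
  refine WittVector.ext fun n => ?_
  have h1 := (key n).symm.trans (hkey' n)
  have h2 : lamO p ^ p * (d'.coeff n - d.coeff n) = 0 := by
    rw [mul_sub, h1, sub_self]
  have h3 := aux_lam_pow_cancel p (d'.coeff n - d.coeff n) h2
  linear_combination h3
end
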